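/- arXiv:math/0106008 — 5 statements merged into one kernel-verified Lean document; each statement's English description precedes it below -/
import Mathlib

section
/- Let n ≥ 0 be an integer, 1 < p < ∞, and ε > 0. The integral operator G on L^p((0,∞), t^{(n+1)p/2 - 1} dt) with kernel k(t,s) = t^{-(n+1)/2-ε} s^{-(n+1)/2+ε} for s ≤ t and k(t,s) = 0 for s > t (acting by (Gu)(t) = ∫₀^∞ k(t,s) u(s) s^n ds) is bounded with operator norm at most 1/ε. -/
open MeasureTheory Set ENNReal

lemma lintA {t r : ℝ} (ht : 0 < t) (hr : -1 < r) :
    ∫⁻ s in Ioc (0:ℝ) t, ENNReal.ofReal (s ^ r) = ENNReal.ofReal (t ^ (r+1) / (r+1)) := by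
  have hint : IntegrableOn (fun s : ℝ => s ^ r) (Ioc 0 t) :=
    (intervalIntegrable_iff_integrableOn_Ioc_of_le ht.le).mp (intervalIntegral.intervalIntegrable_rpow' hr)
  rw [← ofReal_integral_eq_lintegral_ofReal hint
      (((ae_restrict_mem measurableSet_Ioc).mono fun s hs => Real.rpow_nonneg hs.1.le r))]
  congr 1
  rw [← intervalIntegral.integral_of_le ht.le, integral_rpow (Or.inl hr),
    Real.zero_rpow (by linarith), sub_zero]

lemma lintB {s r : ℝ} (hs : 0 < s) (hr : r < -1) :
    ∫⁻ t in Ioi s, ENNReal.ofReal (t ^ r) = ENNReal.ofReal (-s ^ (r+1) / (r+1)) := by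
  rw [← ofReal_integral_eq_lintegral_ofReal (integrableOn_Ioi_rpow_of_lt hr hs)
      (((ae_restrict_mem measurableSet_Ioi).mono fun t ht =>
        Real.rpow_nonneg (hs.trans ht).le r))]
  rw [integral_Ioi_rpow_of_lt hr hs]

lemma swapLem (F : ℝ → ℝ → ℝ≥0∞) (hF : Measurable (Function.uncurry F)) :
    ∫⁻ t in Ioi (0:ℝ), ∫⁻ s in Ioc (0:ℝ) t, F t s
      = ∫⁻ s in Ioi (0:ℝ), ∫⁻ t in Ici s, F t s := by
  have hset : MeasurableSet {q : ℝ × ℝ | q.2 ≤ q.1} := measurableSet_le measurable_snd measurable_fst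
  have hmeas : AEMeasurable (Function.uncurry (fun t s : ℝ => {q : ℝ × ℝ | q.2 ≤ q.1}.indicator (Function.uncurry F) (t, s)))
      ((volume.restrict (Ioi (0:ℝ))).prod (volume.restrict (Ioi (0:ℝ)))) :=
    (hF.indicator hset).aemeasurable
  have key := lintegral_lintegral_swap (μ := volume.restrict (Ioi (0:ℝ)))
    (ν := volume.restrict (Ioi (0:ℝ))) hmeas
  calc ∫⁻ t in Ioi (0:ℝ), ∫⁻ s in Ioc (0:ℝ) t, F t s
      = ∫⁻ t in Ioi (0:ℝ), ∫⁻ s in Ioi (0:ℝ),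
          {q : ℝ × ℝ | q.2 ≤ q.1}.indicator (Function.uncurry F) (t, s) := by
        refine setLIntegral_congr_fun measurableSet_Ioi (fun t ht => ?_)
        have h1 : ∀ s, {q : ℝ × ℝ | q.2 ≤ q.1}.indicator (Function.uncurry F) (t, s)
            = (Iic t).indicator (F t) s := by
          intro s
          by_cases h : s ≤ t
          · rw [Set.indicator_of_mem (by exact h), Set.indicator_of_mem (by exact h)]; rfl
          · rw [Set.indicator_of_notMem (by exact h), Set.indicator_of_notMem (by exact h)]
        rw [lintegral_congr h1, lintegral_indicator measurableSet_Iic,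
          Measure.restrict_restrict measurableSet_Iic,
          show Iic t ∩ Ioi (0:ℝ) = Ioc (0:ℝ) t from by
            ext x; simp only [mem_Ioc, mem_inter_iff, mem_Iic, mem_Ioi]; tauto]
    _ = ∫⁻ s in Ioi (0:ℝ), ∫⁻ t in Ioi (0:ℝ),
          {q : ℝ × ℝ | q.2 ≤ q.1}.indicator (Function.uncurry F) (t, s) := key
    _ = ∫⁻ s in Ioi (0:ℝ), ∫⁻ t in Ici s, F t s := by
        refine setLIntegral_congr_fun measurableSet_Ioi (fun s hs => ?_)
        have h2 : ∀ t, {q : ℝ × ℝ | q.2 ≤ q.1}.indicator (Function.uncurry F) (t, s)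
            = (Ici s).indicator (fun t => F t s) t := by
          intro t
          by_cases h : s ≤ t
          · rw [Set.indicator_of_mem (by exact h), Set.indicator_of_mem (by exact h)]; rfl
          · rw [Set.indicator_of_notMem (by exact h), Set.indicator_of_notMem (by exact h)]
        rw [lintegral_congr h2, lintegral_indicator measurableSet_Ici,
          Measure.restrict_restrict measurableSet_Ici,
          show Ici s ∩ Ioi (0:ℝ) = Ici s from inter_eq_left.mpr fun x hx => mem_Ioi.mpr (lt_of_lt_of_le (mem_Ioi.mp hs) hx)]

/-- The integral operator on `L^p((0,∞), t^{(n+1)p/2-1} dt)` with kernel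
`k(t,s) = t^{-(n+1)/2-ε} s^{-(n+1)/2+ε}` for `s ≤ t` (and `0` for `s > t`), acting by
`(Gu)(t) = ∫₀^∞ k(t,s) u(s) s^n ds`, is bounded with operator norm at most `1/ε`. -/
theorem kernel_case_one_bounded (n : ℕ) (p ε : ℝ) (hp : 1 < p)
    (hε : 0 < ε) (u : ℝ → ℝ≥0∞) (hu : Measurable u) :
    ∫⁻ t in Ioi (0:ℝ),
        (∫⁻ s in Ioc (0:ℝ) t,
            ENNReal.ofReal (t ^ (-((n:ℝ)+1)/2 - ε) * s ^ (-((n:ℝ)+1)/2 + ε)) * u s *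
              ENNReal.ofReal (s ^ (n:ℝ))) ^ p *
          ENNReal.ofReal (t ^ (((n:ℝ)+1)*p/2 - 1)) ≤
      ENNReal.ofReal ((1/ε) ^ p) *
        ∫⁻ t in Ioi (0:ℝ), (u t) ^ p * ENNReal.ofReal (t ^ (((n:ℝ)+1)*p/2 - 1)) := by
  have hp0 : (0:ℝ) < p := lt_trans one_pos hp
  have hp1 : p - 1 ≠ 0 := by linarith
  set q : ℝ := p / (p - 1) with hqdef
  have hq : p.HolderConjugate q := (Real.holderConjugate_iff_eq_conjExponent hp).mpr rfl
  have hq0 : q ≠ 0 := hq.symm.ne_zero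
  have hpq : p / q = p - 1 := hq.div_conj_eq_sub_one
  set A : ℝ := -((n:ℝ)+1)/2 - ε with hA
  set B : ℝ := -((n:ℝ)+1)/2 + ε with hB
  set c : ℝ := B + n with hc
  set d : ℝ := (ε - 1) / q with hd
  set e : ℝ := c - d with he
  set D : ℝ := ((n:ℝ)+1)*p/2 - 1 with hD
  -- exponent identities
  have idq : d * q = ε - 1 := div_mul_cancel₀ _ hq0
  have idAD : A * p + D = -ε * p - 1 := by rw [hA, hD]; ring
  have ideD : e * p - ε = D := by
    rw [he, hc, hd, hD, hB, hqdef]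
    field_simp
    ring
  -- functions
  set g : ℝ → ℝ≥0∞ := fun s => u s * ENNReal.ofReal (s ^ e) with hgdef
  have hg : Measurable g := hu.mul (ENNReal.measurable_ofReal.comp (measurable_id.pow_const e))
  have hgp : Measurable fun s => g s ^ p := hg.pow_const p
  set h : ℝ → ℝ≥0∞ := fun s => ENNReal.ofReal (s ^ d) with hhdef
  have hh : Measurable h := ENNReal.measurable_ofReal.comp (measurable_id.pow_const d)
  -- Step 1: pointwise bound for t > 0
  have step1 : ∀ t ∈ Ioi (0:ℝ),
      (∫⁻ s in Ioc (0:ℝ) t,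
          ENNReal.ofReal (t ^ A * s ^ B) * u s * ENNReal.ofReal (s ^ (n:ℝ))) ^ p *
        ENNReal.ofReal (t ^ D)
      ≤ ENNReal.ofReal (ε ^ (1-p)) *
          ∫⁻ s in Ioc (0:ℝ) t, g s ^ p * ENNReal.ofReal (t ^ (-ε - 1)) := by
    intro t ht
    rw [mem_Ioi] at ht
    -- rewrite inner integral
    have e1 : ∫⁻ s in Ioc (0:ℝ) t,
        ENNReal.ofReal (t ^ A * s ^ B) * u s * ENNReal.ofReal (s ^ (n:ℝ))
        = ENNReal.ofReal (t ^ A) * ∫⁻ s in Ioc (0:ℝ) t, (g * h) s := by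
      rw [← lintegral_const_mul' _ _ ofReal_ne_top]
      refine setLIntegral_congr_fun measurableSet_Ioc (fun s hs => ?_)
      have hs0 : (0:ℝ) < s := hs.1
      have h1 : ENNReal.ofReal (t ^ A * s ^ B)
          = ENNReal.ofReal (t ^ A) * ENNReal.ofReal (s ^ B) :=
        ENNReal.ofReal_mul (Real.rpow_nonneg ht.le _)
      have h2 : ENNReal.ofReal (s ^ B) * ENNReal.ofReal (s ^ (n:ℝ))
          = ENNReal.ofReal (s ^ c) := by
        rw [← ENNReal.ofReal_mul (Real.rpow_nonneg hs0.le _), ← Real.rpow_add hs0, hc]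
      have h3 : ENNReal.ofReal (s ^ e) * ENNReal.ofReal (s ^ d)
          = ENNReal.ofReal (s ^ c) := by
        rw [← ENNReal.ofReal_mul (Real.rpow_nonneg hs0.le _), ← Real.rpow_add hs0,
          show e + d = c from by rw [he]; ring]
      show ENNReal.ofReal (t ^ A * s ^ B) * u s * ENNReal.ofReal (s ^ (n:ℝ))
          = ENNReal.ofReal (t ^ A) * (g s * h s)
      rw [h1, hgdef, hhdef]
      calc ENNReal.ofReal (t ^ A) * ENNReal.ofReal (s ^ B) * u s * ENNReal.ofReal (s ^ (n:ℝ))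
          = ENNReal.ofReal (t ^ A) * (u s * (ENNReal.ofReal (s ^ B) * ENNReal.ofReal (s ^ (n:ℝ)))) := by ring
        _ = ENNReal.ofReal (t ^ A) * (u s * ENNReal.ofReal (s ^ c)) := by rw [h2]
        _ = ENNReal.ofReal (t ^ A) * (u s * (ENNReal.ofReal (s ^ e) * ENNReal.ofReal (s ^ d))) := by rw [h3]
        _ = ENNReal.ofReal (t ^ A) * (u s * ENNReal.ofReal (s ^ e) * ENNReal.ofReal (s ^ d)) := by ring
    -- Hölder
    have hq_int : ∫⁻ s in Ioc (0:ℝ) t, h s ^ q = ENNReal.ofReal (t ^ ε / ε) := by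
      have e2 : ∫⁻ s in Ioc (0:ℝ) t, h s ^ q = ∫⁻ s in Ioc (0:ℝ) t, ENNReal.ofReal (s ^ (ε-1)) := by
        refine setLIntegral_congr_fun measurableSet_Ioc (fun s hs => ?_)
        show ENNReal.ofReal (s ^ d) ^ q = _
        rw [ENNReal.ofReal_rpow_of_pos (Real.rpow_pos_of_pos hs.1 d),
          ← Real.rpow_mul hs.1.le, idq]
      rw [e2, lintA ht (show (-1:ℝ) < ε - 1 by linarith), show ε - 1 + 1 = ε by ring]
    have holder := ENNReal.lintegral_mul_le_Lp_mul_Lq (volume.restrict (Ioc (0:ℝ) t)) hq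
      hg.aemeasurable hh.aemeasurable
    rw [hq_int] at holder
    -- raise to the power p
    have hJp : (∫⁻ s in Ioc (0:ℝ) t, (g * h) s) ^ p
        ≤ (∫⁻ s in Ioc (0:ℝ) t, g s ^ p) * ENNReal.ofReal ((t ^ ε / ε) ^ (p-1)) := by
      calc (∫⁻ s in Ioc (0:ℝ) t, (g * h) s) ^ p
          ≤ ((∫⁻ s in Ioc (0:ℝ) t, g s ^ p) ^ (1/p) * ENNReal.ofReal (t ^ ε / ε) ^ (1/q)) ^ p :=
            ENNReal.rpow_le_rpow holder hp0.le
        _ = (∫⁻ s in Ioc (0:ℝ) t, g s ^ p) ^ (1/p * p) *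
              ENNReal.ofReal (t ^ ε / ε) ^ (1/q * p) := by
            rw [ENNReal.mul_rpow_of_nonneg _ _ hp0.le, ← ENNReal.rpow_mul, ← ENNReal.rpow_mul]
        _ = (∫⁻ s in Ioc (0:ℝ) t, g s ^ p) * ENNReal.ofReal ((t ^ ε / ε) ^ (p-1)) := by
            rw [one_div_mul_cancel hp0.ne', ENNReal.rpow_one,
              show 1/q * p = p / q from by ring, hpq,
              ENNReal.ofReal_rpow_of_pos (div_pos (Real.rpow_pos_of_pos ht ε) hε)]
    -- the weight computation
    have hwt : (t ^ ε / ε) ^ (p-1) * t ^ (-ε * p - 1) = ε ^ (1-p) * t ^ (-ε - 1) := by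
      rw [Real.div_rpow (Real.rpow_nonneg ht.le ε) hε.le, ← Real.rpow_mul ht.le,
        div_mul_eq_mul_div, ← Real.rpow_add ht,
        show ε * (p-1) + (-ε * p - 1) = -ε - 1 from by ring,
        show (1:ℝ)-p = -(p-1) from by ring, Real.rpow_neg hε.le,
        div_eq_mul_inv, mul_comm]
    have hcollect : ENNReal.ofReal (t^(A*p)) * ENNReal.ofReal ((t ^ ε / ε) ^ (p-1)) *
        ENNReal.ofReal (t^D) = ENNReal.ofReal (ε^(1-p)) * ENNReal.ofReal (t^(-ε-1)) := by
      rw [← ENNReal.ofReal_mul (Real.rpow_nonneg ht.le _),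
        ← ENNReal.ofReal_mul (by positivity),
        ← ENNReal.ofReal_mul (Real.rpow_nonneg hε.le _)]
      congr 1
      rw [mul_right_comm, ← Real.rpow_add ht, idAD, mul_comm]
      exact hwt
    calc (∫⁻ s in Ioc (0:ℝ) t,
            ENNReal.ofReal (t ^ A * s ^ B) * u s * ENNReal.ofReal (s ^ (n:ℝ))) ^ p *
          ENNReal.ofReal (t ^ D)
        = (ENNReal.ofReal (t^A) * ∫⁻ s in Ioc (0:ℝ) t, (g * h) s) ^ p *
            ENNReal.ofReal (t ^ D) := by rw [e1]
      _ = ENNReal.ofReal (t^(A*p)) * (∫⁻ s in Ioc (0:ℝ) t, (g * h) s) ^ p *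
            ENNReal.ofReal (t ^ D) := by
          rw [ENNReal.mul_rpow_of_nonneg _ _ hp0.le,
            ENNReal.ofReal_rpow_of_pos (Real.rpow_pos_of_pos ht A), ← Real.rpow_mul ht.le]
      _ ≤ ENNReal.ofReal (t^(A*p)) *
            ((∫⁻ s in Ioc (0:ℝ) t, g s ^ p) * ENNReal.ofReal ((t ^ ε / ε) ^ (p-1))) *
            ENNReal.ofReal (t ^ D) := by gcongr
      _ = (∫⁻ s in Ioc (0:ℝ) t, g s ^ p) *
            (ENNReal.ofReal (t^(A*p)) * ENNReal.ofReal ((t ^ ε / ε) ^ (p-1)) *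
              ENNReal.ofReal (t^D)) := by ring
      _ = (∫⁻ s in Ioc (0:ℝ) t, g s ^ p) *
            (ENNReal.ofReal (ε^(1-p)) * ENNReal.ofReal (t^(-ε-1))) := by rw [hcollect]
      _ = ENNReal.ofReal (ε^(1-p)) *
            ((∫⁻ s in Ioc (0:ℝ) t, g s ^ p) * ENNReal.ofReal (t^(-ε-1))) := by ring
      _ = ENNReal.ofReal (ε ^ (1-p)) *
            ∫⁻ s in Ioc (0:ℝ) t, g s ^ p * ENNReal.ofReal (t ^ (-ε - 1)) := by
          rw [lintegral_mul_const' _ _ ofReal_ne_top]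
  -- Step 2: integrate, swap, and conclude
  have hF : Measurable (Function.uncurry fun t s : ℝ => g s ^ p * ENNReal.ofReal (t ^ (-ε - 1))) :=
    ((hg.comp measurable_snd).pow_const p).mul
      (ENNReal.measurable_ofReal.comp ((measurable_fst (α := ℝ) (β := ℝ)).pow_const (-ε - 1)))
  calc ∫⁻ t in Ioi (0:ℝ),
        (∫⁻ s in Ioc (0:ℝ) t,
            ENNReal.ofReal (t ^ A * s ^ B) * u s * ENNReal.ofReal (s ^ (n:ℝ))) ^ p *
          ENNReal.ofReal (t ^ D)
      ≤ ∫⁻ t in Ioi (0:ℝ), ENNReal.ofReal (ε ^ (1-p)) *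
          ∫⁻ s in Ioc (0:ℝ) t, g s ^ p * ENNReal.ofReal (t ^ (-ε - 1)) :=
        lintegral_mono_ae ((ae_restrict_mem measurableSet_Ioi).mono step1)
    _ = ENNReal.ofReal (ε ^ (1-p)) * ∫⁻ t in Ioi (0:ℝ),
          ∫⁻ s in Ioc (0:ℝ) t, g s ^ p * ENNReal.ofReal (t ^ (-ε - 1)) :=
        lintegral_const_mul' _ _ ofReal_ne_top
    _ = ENNReal.ofReal (ε ^ (1-p)) * ∫⁻ s in Ioi (0:ℝ),
          ∫⁻ t in Ici s, g s ^ p * ENNReal.ofReal (t ^ (-ε - 1)) := by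
        rw [swapLem _ hF]
    _ = ENNReal.ofReal (ε ^ (1-p)) * ∫⁻ s in Ioi (0:ℝ),
          ENNReal.ofReal ε⁻¹ * (u s ^ p * ENNReal.ofReal (s ^ D)) := by
        congr 1
        refine setLIntegral_congr_fun measurableSet_Ioi (fun s hs => ?_)
        rw [mem_Ioi] at hs
        have hIci : ∫⁻ t in Ici s, g s ^ p * ENNReal.ofReal (t ^ (-ε - 1))
            = g s ^ p * ENNReal.ofReal (s ^ (-ε) / ε) := by
          rw [show (volume.restrict (Ici s)) = volume.restrict (Ioi s) from
              (Measure.restrict_congr_set Ioi_ae_eq_Ici).symm,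
            lintegral_const_mul _ ((measurable_id'.pow_const (-ε - 1)).ennreal_ofReal),
            lintB hs (show -ε - 1 < -1 by linarith),
            show -ε - 1 + 1 = -ε from by ring, neg_div_neg_eq]
        rw [hIci]
        have hg1 : g s ^ p = u s ^ p * ENNReal.ofReal (s ^ (e * p)) := by
          rw [ENNReal.mul_rpow_of_nonneg _ _ hp0.le,
            ENNReal.ofReal_rpow_of_pos (Real.rpow_pos_of_pos hs e), ← Real.rpow_mul hs.le]
        have hval : ENNReal.ofReal (s ^ (-ε) / ε)
            = ENNReal.ofReal (s ^ (-ε)) * ENNReal.ofReal ε⁻¹ := by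
          rw [div_eq_mul_inv, ENNReal.ofReal_mul (Real.rpow_nonneg hs.le _)]
        have hse : ENNReal.ofReal (s ^ (e * p)) * ENNReal.ofReal (s ^ (-ε))
            = ENNReal.ofReal (s ^ D) := by
          rw [← ENNReal.ofReal_mul (Real.rpow_nonneg hs.le _), ← Real.rpow_add hs,
            show e * p + -ε = D from by rw [← ideD]; ring]
        calc g s ^ p * ENNReal.ofReal (s ^ (-ε) / ε)
            = u s ^ p * (ENNReal.ofReal (s ^ (e * p)) * ENNReal.ofReal (s ^ (-ε))) *
                ENNReal.ofReal ε⁻¹ := by rw [hg1, hval]; ring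
          _ = ENNReal.ofReal ε⁻¹ * (u s ^ p * ENNReal.ofReal (s ^ D)) := by rw [hse]; ring
    _ = ENNReal.ofReal (ε ^ (1-p)) * (ENNReal.ofReal ε⁻¹ *
          ∫⁻ s in Ioi (0:ℝ), u s ^ p * ENNReal.ofReal (s ^ D)) := by
        rw [lintegral_const_mul' _ _ ofReal_ne_top]
    _ = ENNReal.ofReal ((1/ε) ^ p) * ∫⁻ t in Ioi (0:ℝ), u t ^ p * ENNReal.ofReal (t ^ D) := by
        rw [← mul_assoc, ← ENNReal.ofReal_mul (Real.rpow_nonneg hε.le _)]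
        congr 2
        rw [one_div, show ε⁻¹ = ε ^ (-1:ℝ) from (Real.rpow_neg_one ε).symm,
          ← Real.rpow_add hε, ← Real.rpow_mul hε.le]
        congr 1
        ring
end

section
/- Let n ≥ 0 be an integer, 1 < p < ∞, and ε > 0. The integral operator on L^p((0,∞), t^{(n+1)p/2-1} dt) with kernel k(t,s) = χ_{[0,1]}(t) · t^{-(n+1)/2+ε} s^{-(n+1)/2-ε} for s > t and 0 for s ≤ t (acting by (Gu)(t) = ∫₀^∞ k(t,s) u(s) s^n ds) is bounded with operator norm at most 1/ε. -/
open MeasureTheory Set ENNReal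

lemma L1 {a t : ℝ} (ha : a < -1) (ht : 0 < t) :
    ∫⁻ s in Ioi t, ENNReal.ofReal (s ^ a) = ENNReal.ofReal (-t ^ (a+1) / (a+1)) := by
  rw [← ofReal_integral_eq_lintegral_ofReal (integrableOn_Ioi_rpow_of_lt ha ht)
      ((ae_restrict_iff' measurableSet_Ioi).2 (ae_of_all _ fun s hs =>
        Real.rpow_nonneg (le_of_lt (ht.trans hs)) a)),
    integral_Ioi_rpow_of_lt ha ht]

lemma L2 {a s : ℝ} (ha : -1 < a) (hs : 0 < s) :
    ∫⁻ t in Ioo 0 s, ENNReal.ofReal (t ^ a) = ENNReal.ofReal (s ^ (a+1) / (a+1)) := by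
  rw [Measure.restrict_congr_set Ioo_ae_eq_Ioc]
  have hInt : IntegrableOn (fun x : ℝ => x ^ a) (Ioc 0 s) volume :=
    (intervalIntegrable_iff_integrableOn_Ioc_of_le hs.le).1 (intervalIntegral.intervalIntegrable_rpow' ha)
  rw [← ofReal_integral_eq_lintegral_ofReal hInt
      ((ae_restrict_iff' measurableSet_Ioc).2 (ae_of_all _ fun t htm =>
        Real.rpow_nonneg (le_of_lt htm.1) a)),
    ← intervalIntegral.integral_of_le hs.le, integral_rpow (Or.inl ha)]
  rw [Real.zero_rpow (by linarith), sub_zero]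


lemma swap_lem (f h : ℝ → ℝ≥0∞) (hf : Measurable f) (hh : Measurable h) :
    ∫⁻ t in Ioi (0:ℝ), f t * ∫⁻ s in Ioi t, h s
      = ∫⁻ s in Ioi (0:ℝ), h s * ∫⁻ t in Ioo 0 s, f t := by
  have hmeas : Measurable (fun z : ℝ × ℝ => f z.1 * (Ioi z.1).indicator h z.2) := by
    have : (fun z : ℝ × ℝ => f z.1 * (Ioi z.1).indicator h z.2)
        = fun z : ℝ × ℝ => if z.1 < z.2 then f z.1 * h z.2 else 0 := by
      funext z
      by_cases hz : z.1 < z.2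
      · simp [indicator_of_mem, hz]
      · simp [indicator_of_notMem, hz]
    rw [this]
    exact Measurable.ite (measurableSet_lt measurable_fst measurable_snd)
      ((hf.comp measurable_fst).mul (hh.comp measurable_snd)) measurable_const
  calc ∫⁻ t in Ioi (0:ℝ), f t * ∫⁻ s in Ioi t, h s
      = ∫⁻ t in Ioi (0:ℝ), ∫⁻ s in Ioi (0:ℝ), f t * (Ioi t).indicator h s := by
        refine setLIntegral_congr_fun measurableSet_Ioi (fun t ht => ?_)
        rw [lintegral_const_mul _ (hh.indicator measurableSet_Ioi),
          lintegral_indicator measurableSet_Ioi _,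
          Measure.restrict_restrict measurableSet_Ioi, Ioi_inter_Ioi,
          sup_of_le_left (le_of_lt ht)]
    _ = ∫⁻ s in Ioi (0:ℝ), ∫⁻ t in Ioi (0:ℝ), f t * (Ioi t).indicator h s :=
        lintegral_lintegral_swap (hmeas.aemeasurable)
    _ = ∫⁻ s in Ioi (0:ℝ), h s * ∫⁻ t in Ioo 0 s, f t := by
        refine setLIntegral_congr_fun measurableSet_Ioi (fun s hs => ?_)
        have e : ∀ t : ℝ, f t * (Ioi t).indicator h s = (Iio s).indicator (fun t => h s * f t) t := by
          intro t
          by_cases htx : t < s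
          · simp [Set.indicator_apply, htx, mul_comm]
          · simp [Set.indicator_apply, htx]
        simp_rw [e]
        rw [lintegral_indicator measurableSet_Iio _,
          Measure.restrict_restrict measurableSet_Iio, Iio_inter_Ioi,
          lintegral_const_mul _ hf]

lemma hardy (p ε : ℝ) (hp : 1 < p) (hε : 0 < ε) (g : ℝ → ℝ≥0∞) (hg : Measurable g) :
    ∫⁻ t in Ioi (0:ℝ), (∫⁻ s in Ioi t, g s) ^ p * ENNReal.ofReal (t ^ (ε*p - 1)) ≤
      ENNReal.ofReal ((1/ε) ^ p) *
        ∫⁻ s in Ioi (0:ℝ), (g s) ^ p * ENNReal.ofReal (s ^ (p + ε*p - 1)) := by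
  have hp0 : 0 < p := lt_trans zero_lt_one hp
  set q : ℝ := p / (p - 1) with hq_def
  have hpq : p.HolderConjugate q := (Real.holderConjugate_iff_eq_conjExponent hp).2 rfl
  have hq0 : 0 < q := hpq.symm.pos
  have hpq1 : p / q = p - 1 := hpq.div_conj_eq_sub_one
  set b : ℝ := (1 + ε) / q with hb_def
  have hbq : b * q = 1 + ε := div_mul_cancel₀ _ (ne_of_gt hq0)
  have hbp : b * p = (1 + ε) * (p - 1) := by
    rw [hb_def, div_mul_eq_mul_div, mul_div_assoc, hpq1]
  set X : ℝ → ℝ≥0∞ := fun t => ∫⁻ s in Ioi t, g s ^ p * ENNReal.ofReal (s ^ (b*p)) with hX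
  -- Step 1: pointwise Hölder bound
  have step1 : ∀ t : ℝ, 0 < t →
      (∫⁻ s in Ioi t, g s) ^ p ≤ X t * ENNReal.ofReal (t ^ (-ε) / ε) ^ (p - 1) := by
    intro t ht
    have key : ∫⁻ s in Ioi t, g s ≤
        (X t) ^ (1/p) * (ENNReal.ofReal (t ^ (-ε) / ε)) ^ (1/q) := by
      have e1 : ∫⁻ s in Ioi t, g s
          = ∫⁻ s in Ioi t, (g s * ENNReal.ofReal (s ^ b)) * ENNReal.ofReal (s ^ (-b)) := by
        refine setLIntegral_congr_fun measurableSet_Ioi (fun s hs => ?_)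
        have hs0 : (0:ℝ) < s := lt_trans ht hs
        rw [mul_assoc, ← ENNReal.ofReal_mul (Real.rpow_nonneg hs0.le b),
          ← Real.rpow_add hs0, add_neg_cancel, Real.rpow_zero, ENNReal.ofReal_one, mul_one]
      have mb : ∀ c : ℝ, Measurable fun s : ℝ => ENNReal.ofReal (s ^ c) := by
        intro c; fun_prop
      have hold := ENNReal.lintegral_mul_le_Lp_mul_Lq (volume.restrict (Ioi t)) hpq
        ((hg.mul (mb b)).aemeasurable) ((mb (-b)).aemeasurable)
      rw [e1]
      refine hold.trans (le_of_eq ?_)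
      have e2 : ∫⁻ s in Ioi t, (g s * ENNReal.ofReal (s ^ b)) ^ p = X t := by
        refine setLIntegral_congr_fun measurableSet_Ioi (fun s hs => ?_)
        have hs0 : (0:ℝ) < s := lt_trans ht hs
        rw [ENNReal.mul_rpow_of_nonneg _ _ hp0.le, Real.rpow_mul hs0.le,
          ENNReal.ofReal_rpow_of_pos (Real.rpow_pos_of_pos hs0 b)]
      have e3 : ∫⁻ s in Ioi t, ENNReal.ofReal (s ^ (-b)) ^ q = ENNReal.ofReal (t ^ (-ε) / ε) := by
        have e4 : ∫⁻ s in Ioi t, ENNReal.ofReal (s ^ (-b)) ^ q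
            = ∫⁻ s in Ioi t, ENNReal.ofReal (s ^ (-(1+ε))) := by
          refine setLIntegral_congr_fun measurableSet_Ioi (fun s hs => ?_)
          have hs0 : (0:ℝ) < s := lt_trans ht hs
          rw [ENNReal.ofReal_rpow_of_pos (Real.rpow_pos_of_pos hs0 _), ← Real.rpow_mul hs0.le,
            neg_mul, hbq]
        rw [e4, L1 (by linarith) ht]
        norm_num
      simp only [Pi.mul_apply]
      rw [e2, e3]
    calc (∫⁻ s in Ioi t, g s) ^ p
        ≤ ((X t) ^ (1/p) * (ENNReal.ofReal (t ^ (-ε) / ε)) ^ (1/q)) ^ p :=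
          ENNReal.rpow_le_rpow key hp0.le
      _ = X t * ENNReal.ofReal (t ^ (-ε) / ε) ^ (p - 1) := by
          rw [ENNReal.mul_rpow_of_nonneg _ _ hp0.le, ← ENNReal.rpow_mul, ← ENNReal.rpow_mul,
            one_div_mul_cancel (ne_of_gt hp0), ENNReal.rpow_one]
          congr 1
          rw [div_mul_eq_mul_div, one_mul, hpq1]
  -- main chain
  have mH : Measurable fun s : ℝ => g s ^ p * ENNReal.ofReal (s ^ (b*p)) := by fun_prop
  have mf : Measurable fun t : ℝ => ENNReal.ofReal (t ^ (ε-1)) := by fun_prop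
  have hC : ENNReal.ofReal (ε ^ (-(p-1))) ≠ ⊤ := ENNReal.ofReal_ne_top
  calc ∫⁻ t in Ioi (0:ℝ), (∫⁻ s in Ioi t, g s) ^ p * ENNReal.ofReal (t ^ (ε*p - 1))
      ≤ ∫⁻ t in Ioi (0:ℝ),
          (X t * ENNReal.ofReal (t ^ (-ε) / ε) ^ (p - 1)) * ENNReal.ofReal (t ^ (ε*p - 1)) := by
        refine lintegral_mono_ae ?_
        filter_upwards [ae_restrict_mem measurableSet_Ioi] with t ht
        exact mul_le_mul_left (step1 t ht) _
    _ = ∫⁻ t in Ioi (0:ℝ),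
          ENNReal.ofReal (ε ^ (-(p-1))) * (ENNReal.ofReal (t ^ (ε-1)) * X t) := by
        refine setLIntegral_congr_fun measurableSet_Ioi (fun t ht => ?_)
        have ht0 : (0:ℝ) < t := ht
        have h1 : ENNReal.ofReal (t ^ (-ε) / ε) ^ (p - 1)
            = ENNReal.ofReal (ε ^ (-(p-1))) * ENNReal.ofReal (t ^ (-ε*(p-1))) := by
          rw [ENNReal.ofReal_rpow_of_pos (by positivity), div_eq_mul_inv,
            Real.mul_rpow (by positivity) (by positivity),
            ← Real.rpow_neg_one ε, ← Real.rpow_mul hε.le, ← Real.rpow_mul ht0.le,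
            ENNReal.ofReal_mul (by positivity)]
          rw [mul_comm]
          ring_nf
        have h2 : ENNReal.ofReal (t ^ (-ε*(p-1))) * ENNReal.ofReal (t ^ (ε*p-1))
            = ENNReal.ofReal (t ^ (ε-1)) := by
          rw [← ENNReal.ofReal_mul (by positivity), ← Real.rpow_add ht0]
          congr 1
          ring
        calc X t * ENNReal.ofReal (t ^ (-ε) / ε) ^ (p - 1) * ENNReal.ofReal (t ^ (ε*p - 1))
            = X t * (ENNReal.ofReal (ε ^ (-(p-1))) * ENNReal.ofReal (t ^ (-ε*(p-1))))
              * ENNReal.ofReal (t ^ (ε*p - 1)) := by rw [h1]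
          _ = ENNReal.ofReal (ε ^ (-(p-1))) *
              ((ENNReal.ofReal (t ^ (-ε*(p-1))) * ENNReal.ofReal (t ^ (ε*p-1))) * X t) := by
              ring
          _ = ENNReal.ofReal (ε ^ (-(p-1))) * (ENNReal.ofReal (t ^ (ε-1)) * X t) := by rw [h2]
    _ = ENNReal.ofReal (ε ^ (-(p-1))) * ∫⁻ t in Ioi (0:ℝ), ENNReal.ofReal (t ^ (ε-1)) * X t :=
        lintegral_const_mul' _ _ hC
    _ = ENNReal.ofReal (ε ^ (-(p-1))) * ∫⁻ s in Ioi (0:ℝ),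
          (g s ^ p * ENNReal.ofReal (s ^ (b*p))) * ∫⁻ t in Ioo 0 s, ENNReal.ofReal (t ^ (ε-1)) := by
        rw [swap_lem _ _ mf mH]
    _ = ∫⁻ s in Ioi (0:ℝ), ENNReal.ofReal (ε ^ (-(p-1))) *
          ((g s ^ p * ENNReal.ofReal (s ^ (b*p))) * ∫⁻ t in Ioo 0 s, ENNReal.ofReal (t ^ (ε-1))) :=
        (lintegral_const_mul' _ _ hC).symm
    _ = ∫⁻ s in Ioi (0:ℝ), ENNReal.ofReal ((1/ε) ^ p) *
          (g s ^ p * ENNReal.ofReal (s ^ (p + ε*p - 1))) := by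
        refine setLIntegral_congr_fun measurableSet_Ioi (fun s hs => ?_)
        have hs0 : (0:ℝ) < s := hs
        rw [L2 (by linarith) hs0]
        have e5 : ENNReal.ofReal (s ^ (ε - 1 + 1) / (ε - 1 + 1))
            = ENNReal.ofReal (s ^ ε) * ENNReal.ofReal (ε ^ (-1 : ℝ)) := by
          rw [← ENNReal.ofReal_mul (by positivity)]
          congr 1
          rw [Real.rpow_neg_one]
          congr 1 <;> norm_num
        have e6 : ENNReal.ofReal (ε ^ (-(p-1))) * ENNReal.ofReal (ε ^ (-1:ℝ))
            = ENNReal.ofReal ((1/ε) ^ p) := by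
          rw [← ENNReal.ofReal_mul (by positivity), ← Real.rpow_add hε, one_div,
            ← Real.rpow_neg_one ε, ← Real.rpow_mul hε.le]
          congr 1
          ring
        have e7 : ENNReal.ofReal (s ^ (b*p)) * ENNReal.ofReal (s ^ ε)
            = ENNReal.ofReal (s ^ (p + ε*p - 1)) := by
          rw [← ENNReal.ofReal_mul (by positivity), ← Real.rpow_add hs0]
          congr 1
          rw [hbp]; ring
        calc ENNReal.ofReal (ε ^ (-(p-1))) *
              ((g s ^ p * ENNReal.ofReal (s ^ (b*p))) * ENNReal.ofReal (s ^ (ε - 1 + 1) / (ε - 1 + 1)))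
            = ENNReal.ofReal (ε ^ (-(p-1))) * ((g s ^ p * ENNReal.ofReal (s ^ (b*p))) *
              (ENNReal.ofReal (s ^ ε) * ENNReal.ofReal (ε ^ (-1:ℝ)))) := by rw [e5]
          _ = (ENNReal.ofReal (ε ^ (-(p-1))) * ENNReal.ofReal (ε ^ (-1:ℝ))) *
              (g s ^ p * (ENNReal.ofReal (s ^ (b*p)) * ENNReal.ofReal (s ^ ε))) := by ring
          _ = ENNReal.ofReal ((1/ε) ^ p) * (g s ^ p * ENNReal.ofReal (s ^ (p + ε*p - 1))) := by
              rw [e6, e7]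
    _ = ENNReal.ofReal ((1/ε) ^ p) *
          ∫⁻ s in Ioi (0:ℝ), g s ^ p * ENNReal.ofReal (s ^ (p + ε*p - 1)) :=
        lintegral_const_mul' _ _ ENNReal.ofReal_ne_top

/-- The integral operator on `L^p((0,∞), t^{(n+1)p/2-1} dt)` with kernel
`k(t,s) = χ_{[0,1]}(t) t^{-(n+1)/2+ε} s^{-(n+1)/2-ε}` for `s > t` (and `0` for `s ≤ t`),
acting by `(Gu)(t) = ∫₀^∞ k(t,s) u(s) s^n ds`, is bounded with operator norm at most `1/ε`.
Since the kernel vanishes for `t > 1`, the outer integral is taken over `(0,1]`. -/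
theorem kernel_case_two_bounded (n : ℕ) (p ε : ℝ) (hp : 1 < p) (hε : 0 < ε)
    (u : ℝ → ℝ≥0∞) (hu : Measurable u) :
    ∫⁻ t in Ioc (0:ℝ) 1,
        (∫⁻ s in Ioi t,
            ENNReal.ofReal (t ^ (-((n:ℝ)+1)/2 + ε) * s ^ (-((n:ℝ)+1)/2 - ε)) * u s *
              ENNReal.ofReal (s ^ (n:ℝ))) ^ p *
          ENNReal.ofReal (t ^ (((n:ℝ)+1)*p/2 - 1)) ≤
      ENNReal.ofReal ((1/ε) ^ p) *
        ∫⁻ t in Ioi (0:ℝ), (u t) ^ p * ENNReal.ofReal (t ^ (((n:ℝ)+1)*p/2 - 1)) := by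
  have hp0 : 0 < p := lt_trans zero_lt_one hp
  set a : ℝ := -((n:ℝ)+1)/2 + ε with ha_def
  set β : ℝ := -((n:ℝ)+1)/2 - ε with hβ_def
  set G : ℝ → ℝ≥0∞ := fun s => u s * ENNReal.ofReal (s ^ (β + n)) with hG
  calc ∫⁻ t in Ioc (0:ℝ) 1,
        (∫⁻ s in Ioi t,
            ENNReal.ofReal (t ^ a * s ^ β) * u s * ENNReal.ofReal (s ^ (n:ℝ))) ^ p *
          ENNReal.ofReal (t ^ (((n:ℝ)+1)*p/2 - 1))
      = ∫⁻ t in Ioc (0:ℝ) 1, (∫⁻ s in Ioi t, G s) ^ p * ENNReal.ofReal (t ^ (ε*p - 1)) := by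
        refine setLIntegral_congr_fun measurableSet_Ioc (fun t ht => ?_)
        have ht0 : (0:ℝ) < t := ht.1
        have inner : ∫⁻ s in Ioi t,
            ENNReal.ofReal (t ^ a * s ^ β) * u s * ENNReal.ofReal (s ^ (n:ℝ))
            = ENNReal.ofReal (t ^ a) * ∫⁻ s in Ioi t, G s := by
          rw [← lintegral_const_mul' _ _ ENNReal.ofReal_ne_top]
          refine setLIntegral_congr_fun measurableSet_Ioi (fun s hs => ?_)
          have hs0 : (0:ℝ) < s := lt_trans ht0 hs
          rw [ENNReal.ofReal_mul (by positivity), hG]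
          simp only []
          rw [Real.rpow_add hs0, ENNReal.ofReal_mul (by positivity)]
          ring
        have hw : ENNReal.ofReal (t ^ (a*p)) * ENNReal.ofReal (t ^ (((n:ℝ)+1)*p/2 - 1))
            = ENNReal.ofReal (t ^ (ε*p - 1)) := by
          rw [← ENNReal.ofReal_mul (by positivity), ← Real.rpow_add ht0]
          congr 1
          rw [ha_def]; ring
        rw [inner]
        calc (ENNReal.ofReal (t ^ a) * ∫⁻ s in Ioi t, G s) ^ p *
              ENNReal.ofReal (t ^ (((n:ℝ)+1)*p/2 - 1))
            = (∫⁻ s in Ioi t, G s) ^ p * (ENNReal.ofReal (t ^ (a*p)) *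
              ENNReal.ofReal (t ^ (((n:ℝ)+1)*p/2 - 1))) := by
              rw [ENNReal.mul_rpow_of_nonneg _ _ hp0.le,
                ENNReal.ofReal_rpow_of_pos (Real.rpow_pos_of_pos ht0 a), ← Real.rpow_mul ht0.le]
              ring
          _ = (∫⁻ s in Ioi t, G s) ^ p * ENNReal.ofReal (t ^ (ε*p - 1)) := by rw [hw]
    _ ≤ ∫⁻ t in Ioi (0:ℝ), (∫⁻ s in Ioi t, G s) ^ p * ENNReal.ofReal (t ^ (ε*p - 1)) :=
        lintegral_mono' (Measure.restrict_mono (fun x hx => hx.1) le_rfl) le_rfl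
    _ ≤ ENNReal.ofReal ((1/ε) ^ p) *
          ∫⁻ s in Ioi (0:ℝ), G s ^ p * ENNReal.ofReal (s ^ (p + ε*p - 1)) :=
        hardy p ε hp hε G (by fun_prop)
    _ = ENNReal.ofReal ((1/ε) ^ p) *
          ∫⁻ t in Ioi (0:ℝ), (u t) ^ p * ENNReal.ofReal (t ^ (((n:ℝ)+1)*p/2 - 1)) := by
        congr 1
        refine setLIntegral_congr_fun measurableSet_Ioi (fun s hs => ?_)
        have hs0 : (0:ℝ) < s := hs
        rw [hG]
        simp only []
        rw [ENNReal.mul_rpow_of_nonneg _ _ hp0.le,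
          ENNReal.ofReal_rpow_of_pos (Real.rpow_pos_of_pos hs0 _), ← Real.rpow_mul hs0.le,
          mul_assoc, ← ENNReal.ofReal_mul (by positivity), ← Real.rpow_add hs0]
        congr 2
        rw [hβ_def]; ring
end

section
/- Under the same hypotheses (A1), (A2) on a closed densely defined operator A on a Banach space F, the map z ↦ A^z from the open left half-plane ℍ = {Re z < 0} to the bounded operators on F is holomorphic. -/
open MeasureTheory Complex

/-- The keyhole region `Λ(δ,θ) = {λ : |λ| ≤ δ or |arg λ| ≥ θ}`. -/
def keyhole (δ θ : ℝ) : Set ℂ := {l : ℂ | ‖l‖ ≤ δ ∨ θ ≤ |Complex.arg l|}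

/-- The (positively oriented, with `Λ` to the left) parametrized boundary `𝒞` of the
keyhole `Λ(δ,θ)`: the incoming ray `{r e^{iθ} : r ≥ δ}`, the arc `{δ e^{-iu} : |u| ≤ θ}`
and the outgoing ray `{r e^{-iθ} : r ≥ δ}`. -/
noncomputable def keyholeContour (δ θ : ℝ) : ℝ → ℂ := fun u =>
  if u ≤ -θ then ((δ - (u + θ) : ℝ) : ℂ) * Complex.exp (θ * Complex.I)
  else if u ≤ θ then ((δ : ℝ) : ℂ) * Complex.exp (-(u : ℂ) * Complex.I)
  else ((δ + (u - θ) : ℝ) : ℂ) * Complex.exp (-(θ : ℂ) * Complex.I)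

variable {F : Type*} [NormedAddCommGroup F] [NormedSpace ℂ F] [CompleteSpace F]

/-- The Dunford integral `A^z = (1/2πi) ∫_𝒞 λ^z (λ-A)^{-1} dλ`, where `R λ = (λ-A)^{-1}`
and `λ^z` is the principal branch power. -/
noncomputable def cpowA (δ θ : ℝ) (R : ℂ → F →L[ℂ] F) (z : ℂ) : F →L[ℂ] F :=
  (2 * (Real.pi : ℂ) * Complex.I)⁻¹ •
    ∫ u : ℝ, ((keyholeContour δ θ u) ^ z * deriv (keyholeContour δ θ) u) •
      R (keyholeContour δ θ u)

namespace CPAux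

noncomputable def rr (δ θ : ℝ) (u : ℝ) : ℝ :=
  if u ≤ -θ then δ - (u + θ) else if u ≤ θ then δ else δ + (u - θ)

lemma rr_ge (δ θ : ℝ) (u : ℝ) : δ ≤ rr δ θ u := by
  unfold rr; split_ifs <;> linarith

lemma rr_le (δ θ : ℝ) (hθ : 0 < θ) (u : ℝ) : rr δ θ u ≤ δ + |u| := by
  unfold rr; split_ifs with h1 h2
  · rw [abs_of_nonpos (by linarith)]; linarith
  · linarith [abs_nonneg u]
  · rw [abs_of_pos (by linarith)]; linarith

lemma rr_eq_of_ge (δ θ : ℝ) (hθ : 0 < θ) (u : ℝ) (h : θ ≤ |u|) :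
    rr δ θ u = δ + |u| - θ := by
  unfold rr
  rcases abs_cases u with ⟨he, h0⟩ | ⟨he, h0⟩
  · rw [he] at h ⊢
    by_cases h2 : u ≤ θ
    · have : u = θ := le_antisymm h2 h
      rw [if_neg (by linarith), if_pos h2, this]; ring
    · rw [if_neg (by linarith), if_neg h2]; ring
  · rw [he] at h ⊢
    rw [if_pos (by linarith)]; ring

lemma abs_contour (δ θ : ℝ) (hδ : 0 < δ) (hθ : 0 < θ) (u : ℝ) :
    ‖keyholeContour δ θ u‖ = rr δ θ u := by
  have h1 : ∀ x : ℂ, ‖Complex.exp (x * Complex.I)‖ = Real.exp (-x.im) := by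
    intro x; rw [Complex.norm_exp]; congr 1; simp
  unfold keyholeContour rr
  split_ifs with hb1 hb2 <;>
    rw [norm_mul, h1, Complex.norm_real] <;> simp <;> linarith

lemma contour_ne_zero (δ θ : ℝ) (hδ : 0 < δ) (hθ : 0 < θ) (u : ℝ) :
    keyholeContour δ θ u ≠ 0 := by
  intro h
  have := abs_contour δ θ hδ hθ u
  rw [h] at this
  simp at this
  linarith [rr_ge δ θ u]

lemma arg_ray (ρ φ : ℝ) (hρ : 0 < ρ) (hφ : φ ∈ Set.Ioc (-Real.pi) Real.pi) :
    ((ρ : ℂ) * Complex.exp ((φ : ℂ) * Complex.I)).arg = φ := by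
  rw [Complex.exp_mul_I]
  exact Complex.arg_mul_cos_add_sin_mul_I hρ hφ

lemma contour_mem (δ θ : ℝ) (hδ : 0 < δ) (hθ : 0 < θ) (hθπ : θ < Real.pi) (u : ℝ) :
    keyholeContour δ θ u ∈ keyhole δ θ := by
  unfold keyholeContour keyhole
  split_ifs with h1 h2
  · right
    rw [arg_ray _ _ (by linarith) ⟨by linarith, hθπ.le⟩]
    rw [abs_of_pos hθ]
  · left
    have : -(u : ℂ) * Complex.I = ((-u : ℝ) : ℂ) * Complex.I := by push_cast; ring
    rw [this]
    simp [norm_mul, Complex.norm_exp]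
    rw [abs_of_pos hδ]
  · right
    have : -(θ : ℂ) * Complex.I = ((-θ : ℝ) : ℂ) * Complex.I := by push_cast; ring
    rw [this, arg_ray _ _ (by linarith) ⟨by linarith, by linarith⟩]
    rw [abs_neg, abs_of_pos hθ]

lemma contour_continuous (δ θ : ℝ) (hθ : 0 < θ) :
    Continuous (keyholeContour δ θ) := by
  unfold keyholeContour
  apply Continuous.if_le
  · exact (Complex.continuous_ofReal.comp (by continuity)).mul continuous_const
  · apply Continuous.if_le
    · exact continuous_const.mul (Complex.continuous_exp.comp (by continuity))
    · exact (Complex.continuous_ofReal.comp (by continuity)).mul continuous_const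
    · exact continuous_id
    · exact continuous_const
    · intro x hx
      rw [hx] at *
      norm_num
  · exact continuous_id
  · exact continuous_const
  · intro x hx
    rw [hx]
    rw [if_pos (by linarith)]
    push_cast
    norm_num

lemma hasDerivAt_ofReal (u : ℝ) : HasDerivAt (fun v : ℝ => (v : ℂ)) 1 u := by
  simpa using (hasDerivAt_id u).ofReal_comp

lemma deriv_contour_bound (δ θ : ℝ) (hδ : 0 < δ) (hθ : 0 < θ) (u : ℝ)
    (h1 : u ≠ -θ) (h2 : u ≠ θ) :
    ‖deriv (keyholeContour δ θ) u‖ ≤ max 1 δ := by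
  rcases lt_or_gt_of_ne h1 with hu1 | hu1
  · -- u < -θ : first ray
    have he : keyholeContour δ θ =ᶠ[nhds u]
        fun v => ((δ : ℂ) - ((v : ℂ) + (θ : ℂ))) * Complex.exp ((θ : ℂ) * Complex.I) := by
      filter_upwards [Iio_mem_nhds hu1] with v hv
      rw [keyholeContour, if_pos (le_of_lt hv)]
      push_cast; ring_nf
    rw [he.deriv_eq]
    have hd : HasDerivAt (fun v : ℝ => ((δ : ℂ) - ((v : ℂ) + (θ : ℂ))) *
        Complex.exp ((θ : ℂ) * Complex.I))
        ((-1) * Complex.exp ((θ : ℂ) * Complex.I)) u := by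
      have := (((hasDerivAt_ofReal u).add_const (θ : ℂ)).const_sub (δ : ℂ)).mul_const
        (Complex.exp ((θ : ℂ) * Complex.I))
      simpa using this
    rw [hd.deriv]
    rw [norm_mul, Complex.norm_exp]
    simp
  rcases lt_or_gt_of_ne h2 with hu2 | hu2
  · -- -θ < u < θ : arc
    have he : keyholeContour δ θ =ᶠ[nhds u]
        fun v => ((δ : ℝ) : ℂ) * Complex.exp (-(v : ℂ) * Complex.I) := by
      filter_upwards [Ioo_mem_nhds hu1 hu2] with v hv
      rw [keyholeContour, if_neg (by push_neg; exact hv.1), if_pos hv.2.le]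
    rw [he.deriv_eq]
    have hin : HasDerivAt (fun v : ℝ => -(v : ℂ) * Complex.I) (-Complex.I) u := by
      simpa using ((hasDerivAt_ofReal u).neg.mul_const Complex.I)
    have hd := (hin.cexp).const_mul ((δ : ℝ) : ℂ)
    rw [hd.deriv]
    rw [norm_mul, norm_mul, Complex.norm_exp]
    simp [abs_of_pos hδ]
  · -- θ < u : second ray
    have he : keyholeContour δ θ =ᶠ[nhds u]
        fun v => ((δ : ℂ) + ((v : ℂ) - (θ : ℂ))) * Complex.exp (-(θ : ℂ) * Complex.I) := by
      filter_upwards [Ioi_mem_nhds hu2] with v hv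
      rw [keyholeContour, if_neg (by push_neg; linarith [hv.out]), if_neg (by push_neg; exact hv)]
      push_cast; ring_nf
    rw [he.deriv_eq]
    have hd : HasDerivAt (fun v : ℝ => ((δ : ℂ) + ((v : ℂ) - (θ : ℂ))) *
        Complex.exp (-(θ : ℂ) * Complex.I))
        (1 * Complex.exp (-(θ : ℂ) * Complex.I)) u := by
      have := (((hasDerivAt_ofReal u).sub_const (θ : ℂ)).const_add (δ : ℂ)).mul_const
        (Complex.exp (-(θ : ℂ) * Complex.I))
      simpa using this
    rw [hd.deriv]
    rw [norm_mul, Complex.norm_exp]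
    simp


/-- Abstract resolvent identity from the algebraic hypotheses. -/
lemma resolvent_id {D : Submodule ℂ F} {A : D →ₗ[ℂ] F} {R : ℂ → F →L[ℂ] F} {K : Set ℂ}
    (hres : ∀ lam ∈ K,
      (∀ f : F, R lam f ∈ D) ∧
      (∀ (f : F) (h : R lam f ∈ D), A ⟨R lam f, h⟩ = lam • R lam f - f) ∧
      (∀ d : D, R lam (lam • (d : F) - A d) = (d : F)))
    {lam mu : ℂ} (hl : lam ∈ K) (hm : mu ∈ K) (f : F) :
    R lam f - R mu f = (mu - lam) • R lam (R mu f) := by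
  obtain ⟨hm1, hm2, hm3⟩ := hres mu hm
  obtain ⟨hl1, hl2, hl3⟩ := hres lam hl
  have hd : R mu f ∈ D := hm1 f
  have key := hl3 ⟨R mu f, hd⟩
  have hA : A ⟨R mu f, hd⟩ = mu • R mu f - f := hm2 f hd
  rw [hA] at key
  -- key : R lam (lam • R mu f - (mu • R mu f - f)) = R mu f
  have : lam • R mu f - (mu • R mu f - f) = (lam - mu) • R mu f + f := by
    rw [sub_smul]; abel
  rw [this, map_add, _root_.map_smul] at key
  simp only [Submodule.coe_mk] at key
  have goal : R lam f - R mu f = -((lam - mu) • R lam (R mu f)) := by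
    conv_lhs => rw [← key]
    abel
  rw [goal, ← neg_smul, neg_sub]

/-- Continuity of `R` on the set where it is a resolvent. -/
lemma resolvent_continuousOn {D : Submodule ℂ F} {A : D →ₗ[ℂ] F} {R : ℂ → F →L[ℂ] F} {K : Set ℂ}
    (hres : ∀ lam ∈ K,
      (∀ f : F, R lam f ∈ D) ∧
      (∀ (f : F) (h : R lam f ∈ D), A ⟨R lam f, h⟩ = lam • R lam f - f) ∧
      (∀ d : D, R lam (lam • (d : F) - A d) = (d : F))) :
    ContinuousOn R K := by
  intro mu hm
  have hid : ∀ lam ∈ K, R lam - R mu = (mu - lam) • ((R lam).comp (R mu)) := by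
    intro lam hl
    ext f
    simp only [ContinuousLinearMap.sub_apply, ContinuousLinearMap.smul_apply,
      ContinuousLinearMap.comp_apply]
    exact resolvent_id hres hl hm f
  set c : ℝ := ‖R mu‖ with hc
  have hcnn : 0 ≤ c := norm_nonneg _
  have hpos : (0:ℝ) < 2 * c + 2 := by linarith
  have hbound : ∀ lam ∈ K, ‖lam - mu‖ ≤ (2 * c + 2)⁻¹ →
      ‖R lam - R mu‖ ≤ ‖lam - mu‖ * ((2 * c + 1) * c) := by
    intro lam hl hcl
    have habs : ‖mu - lam‖ = ‖lam - mu‖ := by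
      rw [show mu - lam = -(lam - mu) by ring, norm_neg]
    have h1 : ‖R lam - R mu‖ ≤ ‖lam - mu‖ * (‖R lam‖ * c) := by
      rw [hid lam hl]
      calc ‖(mu - lam) • (R lam).comp (R mu)‖
          = ‖mu - lam‖ * ‖(R lam).comp (R mu)‖ :=
            norm_smul (mu - lam) ((R lam).comp (R mu))
        _ ≤ ‖lam - mu‖ * (‖R lam‖ * c) := by
            rw [habs]
            gcongr
            exact ContinuousLinearMap.opNorm_comp_le _ _
    have hRl : ‖R lam‖ ≤ 2 * c + 1 := by
      have h2 : ‖R lam‖ ≤ ‖R lam - R mu‖ + c := by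
        calc ‖R lam‖ = ‖(R lam - R mu) + R mu‖ := by rw [sub_add_cancel]
          _ ≤ ‖R lam - R mu‖ + c := norm_add_le _ _
      have h4 : ‖lam - mu‖ * (‖R lam‖ * c) ≤ (2*c+2)⁻¹ * (‖R lam‖ * c) := by
        gcongr
      have h5 : ‖R lam‖ ≤ (2*c+2)⁻¹ * (‖R lam‖ * c) + c := by linarith
      have hx := mul_le_mul_of_nonneg_right h5 hpos.le
      have hexp : ((2*c+2)⁻¹ * (‖R lam‖ * c) + c) * (2*c+2)
          = ‖R lam‖ * c + c * (2*c+2) := by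
        field_simp
      rw [hexp] at hx
      nlinarith [norm_nonneg (R lam)]
    calc ‖R lam - R mu‖ ≤ ‖lam - mu‖ * (‖R lam‖ * c) := h1
      _ ≤ ‖lam - mu‖ * ((2 * c + 1) * c) := by gcongr
  rw [ContinuousWithinAt, tendsto_iff_norm_sub_tendsto_zero]
  apply squeeze_zero'
  · exact Filter.Eventually.of_forall (fun lam => norm_nonneg _)
  · have h1 : ∀ᶠ lam in nhdsWithin mu K, lam ∈ K := self_mem_nhdsWithin
    have h2 : ∀ᶠ lam in nhdsWithin mu K, ‖lam - mu‖ ≤ (2*c+2)⁻¹ := by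
      apply Filter.Eventually.filter_mono nhdsWithin_le_nhds
      have := Metric.closedBall_mem_nhds mu (show (0:ℝ) < (2*c+2)⁻¹ by positivity)
      filter_upwards [this] with lam hlam
      rw [Metric.mem_closedBall, Complex.dist_eq] at hlam
      exact hlam
    filter_upwards [h1, h2] with lam hl hcl
    exact hbound lam hl hcl
  · have : Filter.Tendsto (fun lam : ℂ => ‖lam - mu‖ * ((2 * c + 1) * c))
        (nhds mu) (nhds 0) := by
      have h0 : Filter.Tendsto (fun lam : ℂ => ‖lam - mu‖) (nhds mu) (nhds 0) := by
        have := ((continuous_id.sub (continuous_const (y := mu))).norm).tendsto mu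
        simpa using this
      simpa using h0.mul_const ((2 * c + 1) * c)
    exact this.mono_left nhdsWithin_le_nhds

lemma rr_pos (δ θ : ℝ) (hδ : 0 < δ) (u : ℝ) : 0 < rr δ θ u :=
  lt_of_lt_of_le hδ (rr_ge δ θ u)

lemma cpow_abs_bound (δ θ : ℝ) (hδ : 0 < δ) (hθ : 0 < θ) (u : ℝ) (z : ℂ) (a q b : ℝ)
    (ha : 0 < a) (hq : q ≤ z.re) (hre : z.re ≤ -a) (him : |z.im| ≤ b) :
    ‖keyholeContour δ θ u ^ z‖ ≤
      Real.exp (b * Real.pi) * (max 1 (δ ^ (q + a)) * rr δ θ u ^ (-a)) := by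
  have hb : 0 ≤ b := le_trans (abs_nonneg _) him
  have hrrpos := rr_pos δ θ hδ u
  rw [Complex.norm_cpow_of_ne_zero (contour_ne_zero δ θ hδ hθ u), abs_contour δ θ hδ hθ u]
  rw [div_eq_mul_inv, ← Real.exp_neg]
  have h1 : Real.exp (-((keyholeContour δ θ u).arg * z.im)) ≤ Real.exp (b * Real.pi) := by
    apply Real.exp_le_exp.2
    calc -((keyholeContour δ θ u).arg * z.im) ≤ |(keyholeContour δ θ u).arg * z.im| :=
          neg_le_abs _
      _ = |(keyholeContour δ θ u).arg| * |z.im| := abs_mul _ _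
      _ ≤ Real.pi * b := by
          apply mul_le_mul (Complex.abs_arg_le_pi _) him (abs_nonneg _) Real.pi_pos.le
      _ = b * Real.pi := mul_comm _ _
  have h2 : rr δ θ u ^ z.re ≤ max 1 (δ ^ (q + a)) * rr δ θ u ^ (-a) := by
    have : rr δ θ u ^ z.re = rr δ θ u ^ (z.re + a) * rr δ θ u ^ (-a) := by
      rw [← Real.rpow_add hrrpos]; ring_nf
    rw [this]
    apply mul_le_mul_of_nonneg_right ?_ (by positivity)
    rcases le_or_gt 1 (rr δ θ u) with hr1 | hr1
    · exact le_max_of_le_left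
        (Real.rpow_le_one_of_one_le_of_nonpos hr1 (by linarith))
    · apply le_max_of_le_right
      calc rr δ θ u ^ (z.re + a) ≤ δ ^ (z.re + a) :=
            Real.rpow_le_rpow_of_nonpos hδ (rr_ge δ θ u) (by linarith)
        _ ≤ δ ^ (q + a) := by
            apply Real.rpow_le_rpow_of_exponent_ge hδ
            · linarith [rr_ge δ θ u]
            · linarith
  calc rr δ θ u ^ z.re * Real.exp (-((keyholeContour δ θ u).arg * z.im))
      ≤ (max 1 (δ ^ (q + a)) * rr δ θ u ^ (-a)) * Real.exp (b * Real.pi) := by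
        apply mul_le_mul h2 h1 (Real.exp_pos _).le (by positivity)
    _ = Real.exp (b * Real.pi) * (max 1 (δ ^ (q + a)) * rr δ θ u ^ (-a)) := mul_comm _ _

lemma log_abs_bound (δ θ : ℝ) (hδ : 0 < δ) (hθ : 0 < θ) (u : ℝ) (a : ℝ) (ha : 0 < a) :
    ‖Complex.log (keyholeContour δ θ u)‖ ≤
      |Real.log δ| + Real.pi + (4 / a) * rr δ θ u ^ (a / 4) := by
  have hrrpos := rr_pos δ θ hδ u
  calc ‖Complex.log (keyholeContour δ θ u)‖
      ≤ |(Complex.log (keyholeContour δ θ u)).re| + |(Complex.log (keyholeContour δ θ u)).im| :=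
        Complex.norm_le_abs_re_add_abs_im _
    _ ≤ |Real.log (rr δ θ u)| + Real.pi := by
        rw [Complex.log_re, Complex.log_im, abs_contour δ θ hδ hθ u]
        gcongr
        exact Complex.abs_arg_le_pi _
    _ ≤ (|Real.log δ| + (4 / a) * rr δ θ u ^ (a / 4)) + Real.pi := by
        gcongr
        rcases le_or_gt 1 (rr δ θ u) with hr1 | hr1
        · rw [_root_.abs_of_nonneg (Real.log_nonneg hr1)]
          have hlog : Real.log (rr δ θ u ^ (a / 4)) ≤ rr δ θ u ^ (a / 4) := by
            calc Real.log (rr δ θ u ^ (a / 4)) ≤ rr δ θ u ^ (a / 4) - 1 :=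
                  Real.log_le_sub_one_of_pos (by positivity)
              _ ≤ rr δ θ u ^ (a / 4) := by linarith
          rw [Real.log_rpow hrrpos] at hlog
          have : Real.log (rr δ θ u) ≤ (4 / a) * rr δ θ u ^ (a / 4) := by
            rw [show (4 / a) * rr δ θ u ^ (a / 4) = (rr δ θ u ^ (a/4)) / (a/4) by
              field_simp]
            rw [le_div_iff₀ (by positivity)]
            linarith [mul_comm (a/4) (Real.log (rr δ θ u))]
          calc Real.log (rr δ θ u) ≤ (4/a) * rr δ θ u ^ (a/4) := this
            _ ≤ |Real.log δ| + (4/a) * rr δ θ u ^ (a/4) := by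
                linarith [abs_nonneg (Real.log δ)]
        · rw [_root_.abs_of_nonpos (Real.log_nonpos hrrpos.le hr1.le)]
          have h1 : Real.log δ ≤ Real.log (rr δ θ u) :=
            Real.log_le_log hδ (rr_ge δ θ u)
          calc -Real.log (rr δ θ u) ≤ -Real.log δ := by linarith
            _ ≤ |Real.log δ| := neg_le_abs _
            _ ≤ |Real.log δ| + (4/a) * rr δ θ u ^ (a/4) := by
                  have : (0:ℝ) ≤ (4/a) * rr δ θ u ^ (a/4) :=
                    mul_nonneg (by positivity) (Real.rpow_nonneg hrrpos.le (a/4))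
                  linarith
    _ = |Real.log δ| + Real.pi + (4 / a) * rr δ θ u ^ (a / 4) := by ring

end CPAux

set_option maxHeartbeats 2000000 in
set_option synthInstance.maxHeartbeats 400000 in
open CPAux in
/-- Under conditions (A1) (spectrum avoids `Λ(δ,θ) \ {0}`) and (A2) (`‖(λ-A)^{-1}‖|λ|`
uniformly bounded for large `λ ∈ Λ`), the map `z ↦ A^z` defined by the Dunford integral
is holomorphic on the open left half-plane `{Re z < 0}`. -/
theorem complex_powers_holomorphic (D : Submodule ℂ F) (A : D →ₗ[ℂ] F)
    (δ θ : ℝ) (hδ : 0 < δ) (hθ : 0 < θ) (hθπ : θ < Real.pi)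
    (R : ℂ → F →L[ℂ] F)
    (hdense : Dense (D : Set F))
    (hclosed : IsClosed {q : F × F | ∃ hq : q.1 ∈ D, A ⟨q.1, hq⟩ = q.2})
    (hres : ∀ lam ∈ keyhole δ θ, lam ≠ 0 →
      (∀ f : F, R lam f ∈ D) ∧
      (∀ (f : F) (h : R lam f ∈ D), A ⟨R lam f, h⟩ = lam • R lam f - f) ∧
      (∀ d : D, R lam (lam • (d : F) - A d) = (d : F)))
    (hA2 : ∃ M C : ℝ, ∀ lam ∈ keyhole δ θ, C ≤ ‖lam‖ →
      ‖R lam‖ * ‖lam‖ ≤ M) :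
    DifferentiableOn ℂ (cpowA δ θ R) {z : ℂ | z.re < 0} := by
  unfold cpowA
  obtain ⟨M, C, hMC⟩ := hA2
  set γ : ℝ → ℂ := keyholeContour δ θ with hγdef
  set K : Set ℂ := {l | l ∈ keyhole δ θ ∧ l ≠ 0} with hKdef
  have hres' : ∀ lam ∈ K,
      (∀ f : F, R lam f ∈ D) ∧
      (∀ (f : F) (h : R lam f ∈ D), A ⟨R lam f, h⟩ = lam • R lam f - f) ∧
      (∀ d : D, R lam (lam • (d : F) - A d) = (d : F)) :=
    fun lam hl => hres lam hl.1 hl.2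
  have hRcont : ContinuousOn R K := resolvent_continuousOn hres'
  have hmemK : ∀ u, γ u ∈ K := fun u =>
    ⟨contour_mem δ θ hδ hθ hθπ u, contour_ne_zero δ θ hδ hθ u⟩
  have hγcont : Continuous γ := contour_continuous δ θ hθ
  have hRγcont : Continuous (fun u => R (γ u)) := hRcont.comp_continuous hγcont hmemK
  set M' : ℝ := max M 0 with hM'def
  have hM'nn : 0 ≤ M' := le_max_right _ _
  set C' : ℝ := max C 1 with hC'def
  set T : ℝ := 2*θ + C' + δ + 1 with hTdef
  have hC'1 : (1:ℝ) ≤ C' := le_max_right _ _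
  have hT0 : 0 < T := by rw [hTdef]; linarith
  -- tail estimate
  have hrrtail : ∀ u : ℝ, T ≤ |u| → rr δ θ u = δ + |u| - θ ∧ C' + 1 ≤ rr δ θ u ∧
      (1 + |u|) / 4 ≤ rr δ θ u := by
    intro u hu
    have h1 : θ ≤ |u| := by rw [hTdef] at hu; linarith
    have heq := rr_eq_of_ge δ θ hθ u h1
    refine ⟨heq, ?_, ?_⟩
    · rw [heq, hTdef] at *; linarith
    · rw [heq]; rw [hTdef] at hu; linarith
  have htail : ∀ u : ℝ, T ≤ |u| → ‖R (γ u)‖ ≤ M' / rr δ θ u := by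
    intro u hu
    obtain ⟨heq, hge, _⟩ := hrrtail u hu
    have hrrpos := rr_pos δ θ hδ u
    have habs : ‖γ u‖ = rr δ θ u := abs_contour δ θ hδ hθ u
    have hCle : C ≤ ‖γ u‖ := by
      rw [habs]; calc C ≤ C' := le_max_left _ _
        _ ≤ rr δ θ u := by linarith
    have := hMC (γ u) (hmemK u).1 hCle
    rw [habs] at this
    rw [le_div_iff₀ hrrpos]
    calc ‖R (γ u)‖ * rr δ θ u ≤ M := this
      _ ≤ M' := le_max_left _ _
  -- compact-part estimate
  obtain ⟨M₂, hM₂⟩ := (isCompact_Icc (a := -T) (b := T)).exists_bound_of_continuousOn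
    hRγcont.continuousOn
  set M₂' : ℝ := max M₂ 0 with hM₂'def
  have hM₂'nn : 0 ≤ M₂' := le_max_right _ _
  have hcompact : ∀ u : ℝ, |u| ≤ T → ‖R (γ u)‖ ≤ M₂' := by
    intro u hu
    rcases abs_le.1 hu with ⟨h1, h2⟩
    exact le_trans (hM₂ u ⟨h1, h2⟩) (le_max_left _ _)
  -- pointwise differentiability target
  intro z₀ hz₀
  have hz₀re : z₀.re < 0 := hz₀
  set a : ℝ := -z₀.re / 2 with hadef
  have ha : 0 < a := by rw [hadef]; linarith
  set q : ℝ := z₀.re - a with hqdef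
  set b : ℝ := |z₀.im| + a with hbdef
  have hb : 0 < b := by have := abs_nonneg z₀.im; rw [hbdef]; linarith
  set s : ℝ := 1 + a/4 with hsdef
  have hs1 : 1 < s := by rw [hsdef]; linarith
  set Dq : ℝ := max 1 (δ ^ (q + a)) with hDqdef
  have hDq1 : (1:ℝ) ≤ Dq := le_max_left _ _
  set Eb : ℝ := Real.exp (b * Real.pi) with hEbdef
  have hEb : 0 < Eb := Real.exp_pos _
  set lc : ℝ := |Real.log δ| + Real.pi + 4/a with hlcdef
  have hlc : 0 < lc := by
    have := abs_nonneg (Real.log δ)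
    have := Real.pi_pos
    rw [hlcdef]; positivity
  set B₁ : ℝ := (Eb * (Dq * δ ^ (-a))) *
    ((|Real.log δ| + Real.pi + (4/a) * (δ + T) ^ (a/4)) * ((max 1 δ) * M₂')) with hB₁def
  set B₂ : ℝ := (Eb * Dq * lc * (max 1 δ) * M') * 4 ^ (3*a/4+1) with hB₂def
  have hB₁nn : 0 ≤ B₁ := by
    have h1 : (0:ℝ) ≤ |Real.log δ| + Real.pi + (4/a) * (δ + T) ^ (a/4) := by
      have := abs_nonneg (Real.log δ)
      have := Real.pi_pos
      have : (0:ℝ) ≤ (4/a) * (δ + T) ^ (a/4) :=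
        mul_nonneg (by positivity) (Real.rpow_nonneg (by linarith) _)
      linarith [abs_nonneg (Real.log δ), Real.pi_pos]
    have h2 : (0:ℝ) ≤ δ ^ (-a) := Real.rpow_nonneg hδ.le _
    have h3 : (0:ℝ) ≤ max 1 δ := le_trans zero_le_one (le_max_left _ _)
    rw [hB₁def]
    apply mul_nonneg (mul_nonneg hEb.le (mul_nonneg (by linarith [hDq1]) h2))
    exact mul_nonneg h1 (mul_nonneg h3 hM₂'nn)
  have hB₂nn : 0 ≤ B₂ := by
    have h3 : (0:ℝ) ≤ max 1 δ := le_trans zero_le_one (le_max_left _ _)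
    rw [hB₂def]
    apply mul_nonneg
    · exact mul_nonneg (mul_nonneg (mul_nonneg (mul_nonneg hEb.le (by linarith [hDq1]))
        hlc.le) h3) hM'nn
    · exact Real.rpow_nonneg (by norm_num) _
  set B : ℝ := B₁ * (1 + T) ^ s + B₂ with hBdef
  set bnd : ℝ → ℝ := fun u => B * (1 + |u|) ^ (-s) with hbnddef
  -- facts about z in the ball
  have hball : ∀ z ∈ Metric.ball z₀ a, q ≤ z.re ∧ z.re ≤ -a ∧ |z.im| ≤ b := by
    intro z hz
    rw [Metric.mem_ball, Complex.dist_eq] at hz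
    have hre : |z.re - z₀.re| ≤ ‖z - z₀‖ := by
      have := Complex.abs_re_le_norm (z - z₀)
      rwa [Complex.sub_re] at this
    have him : |z.im - z₀.im| ≤ ‖z - z₀‖ := by
      have := Complex.abs_im_le_norm (z - z₀)
      rwa [Complex.sub_im] at this
    rcases abs_le.1 (le_of_lt (lt_of_le_of_lt hre hz)) with ⟨h1, h2⟩
    rcases abs_le.1 (le_of_lt (lt_of_le_of_lt him hz)) with ⟨h3, h4⟩
    refine ⟨by rw [hqdef]; linarith, by rw [hadef] at *; linarith, ?_⟩
    rcases abs_le.1 (le_refl |z₀.im|) with _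
    rw [hbdef]
    rcases abs_cases z₀.im with ⟨he, _⟩ | ⟨he, _⟩ <;> rcases abs_cases z.im with ⟨he2, _⟩ | ⟨he2, _⟩ <;>
      rw [he2] <;> linarith [abs_nonneg z₀.im, neg_abs_le z₀.im, le_abs_self z₀.im]
  -- the master estimate
  have master : ∀ u : ℝ, u ≠ -θ → u ≠ θ → ∀ z ∈ Metric.ball z₀ a,
      ‖γ u ^ z‖ *
        ((|Real.log δ| + Real.pi + (4/a) * rr δ θ u ^ (a/4)) *
          (‖deriv γ u‖ * ‖R (γ u)‖)) ≤ bnd u := by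
    intro u hu1 hu2 z hz
    obtain ⟨hq1, hq2, hq3⟩ := hball z hz
    have hrrpos := rr_pos δ θ hδ u
    have hcp : ‖γ u ^ z‖ ≤ Eb * (Dq * rr δ θ u ^ (-a)) :=
      cpow_abs_bound δ θ hδ hθ u z a q b ha hq1 hq2 hq3
    have hdγ : ‖deriv γ u‖ ≤ max 1 δ := deriv_contour_bound δ θ hδ hθ u hu1 hu2
    have hlogfac_nn : (0:ℝ) ≤ |Real.log δ| + Real.pi + (4/a) * rr δ θ u ^ (a/4) := by
      have h1 : (0:ℝ) ≤ (4/a) * rr δ θ u ^ (a/4) :=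
        mul_nonneg (by positivity) (Real.rpow_nonneg hrrpos.le _)
      linarith [abs_nonneg (Real.log δ), Real.pi_pos]
    have hRnn : (0:ℝ) ≤ ‖R (γ u)‖ := norm_nonneg _
    have hmδnn : (0:ℝ) ≤ max 1 δ := le_trans zero_le_one (le_max_left _ _)
    have hcpnn : (0:ℝ) ≤ ‖γ u ^ z‖ := norm_nonneg _
    have hEDnn : (0:ℝ) ≤ Eb * (Dq * rr δ θ u ^ (-a)) := by
      have := Real.rpow_nonneg hrrpos.le (-a)
      have h1 : (0:ℝ) ≤ Dq := by linarith [hDq1]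
      positivity
    rcases le_or_gt (|u|) T with hcase | hcase
    · -- |u| ≤ T
      have hP2 : |Real.log δ| + Real.pi + (4/a) * rr δ θ u ^ (a/4)
          ≤ |Real.log δ| + Real.pi + (4/a) * (δ + T) ^ (a/4) := by
        have : rr δ θ u ^ (a/4) ≤ (δ + T) ^ (a/4) := by
          apply Real.rpow_le_rpow hrrpos.le _ (by positivity)
          calc rr δ θ u ≤ δ + |u| := rr_le δ θ hθ u
            _ ≤ δ + T := by linarith
        have h4a : (0:ℝ) ≤ 4/a := by positivity
        have := mul_le_mul_of_nonneg_left this h4a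
        linarith
      have hP1 : ‖γ u ^ z‖ ≤ Eb * (Dq * δ ^ (-a)) := by
        refine le_trans hcp ?_
        have : rr δ θ u ^ (-a) ≤ δ ^ (-a) :=
          Real.rpow_le_rpow_of_nonpos hδ (rr_ge δ θ u) (by linarith)
        have h1 : (0:ℝ) ≤ Dq := by linarith [hDq1]
        apply mul_le_mul_of_nonneg_left (mul_le_mul_of_nonneg_left this h1) hEb.le
      have hP4 : ‖R (γ u)‖ ≤ M₂' := hcompact u hcase
      have step : ‖γ u ^ z‖ *
          ((|Real.log δ| + Real.pi + (4/a) * rr δ θ u ^ (a/4)) *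
            (‖deriv γ u‖ * ‖R (γ u)‖)) ≤ B₁ := by
        rw [hB₁def]
        apply mul_le_mul hP1 _ _ (by
          have h2 : (0:ℝ) ≤ δ ^ (-a) := Real.rpow_nonneg hδ.le _
          have h1 : (0:ℝ) ≤ Dq := by linarith [hDq1]
          positivity)
        · apply mul_le_mul hP2 (mul_le_mul hdγ hP4 hRnn hmδnn)
            (mul_nonneg (norm_nonneg _) hRnn) (by linarith [hP2, hlogfac_nn])
        · exact mul_nonneg hlogfac_nn (mul_nonneg (norm_nonneg _) hRnn)
      refine le_trans step ?_
      -- B₁ ≤ bnd u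
      have h1u : (0:ℝ) < 1 + |u| := by positivity
      have h1T : (0:ℝ) < 1 + T := by linarith
      have hmono : (1 + T) ^ (-s) ≤ (1 + |u|) ^ (-s) :=
        Real.rpow_le_rpow_of_nonpos h1u (by linarith) (by linarith)
      have hone : (1 + T) ^ s * (1 + T) ^ (-s) = 1 := by
        rw [← Real.rpow_add h1T]
        simp
      have key : B₁ ≤ B₁ * (1 + T) ^ s * (1 + |u|) ^ (-s) := by
        calc B₁ = B₁ * ((1 + T) ^ s * (1 + T) ^ (-s)) := by rw [hone, mul_one]
          _ = B₁ * (1 + T) ^ s * (1 + T) ^ (-s) := by ring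
          _ ≤ B₁ * (1 + T) ^ s * (1 + |u|) ^ (-s) := by
              apply mul_le_mul_of_nonneg_left hmono
              exact mul_nonneg hB₁nn (Real.rpow_nonneg h1T.le _)
      calc B₁ ≤ B₁ * (1 + T) ^ s * (1 + |u|) ^ (-s) := key
        _ ≤ bnd u := by
            rw [hbnddef]
            simp only []
            rw [hBdef, add_mul]
            have : (0:ℝ) ≤ B₂ * (1 + |u|) ^ (-s) :=
              mul_nonneg hB₂nn (Real.rpow_nonneg h1u.le _)
            linarith
    · -- T < |u| : tail
      obtain ⟨heq, hge, hge4⟩ := hrrtail u hcase.le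
      have hrr1 : (1:ℝ) ≤ rr δ θ u := by linarith [hC'1]
      have hrpa : (1:ℝ) ≤ rr δ θ u ^ (a/4) := by
        have := Real.rpow_le_rpow_of_exponent_le hrr1 (show (0:ℝ) ≤ a/4 by positivity)
        rwa [Real.rpow_zero] at this
      have hP2 : |Real.log δ| + Real.pi + (4/a) * rr δ θ u ^ (a/4)
          ≤ lc * rr δ θ u ^ (a/4) := by
        rw [hlcdef]
        have h1 := abs_nonneg (Real.log δ)
        have h2 := Real.pi_pos
        nlinarith
      have hP4 : ‖R (γ u)‖ ≤ M' / rr δ θ u := htail u hcase.le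
      have step : ‖γ u ^ z‖ *
          ((|Real.log δ| + Real.pi + (4/a) * rr δ θ u ^ (a/4)) *
            (‖deriv γ u‖ * ‖R (γ u)‖)) ≤
          (Eb * (Dq * rr δ θ u ^ (-a))) *
            ((lc * rr δ θ u ^ (a/4)) * ((max 1 δ) * (M' / rr δ θ u))) := by
        apply mul_le_mul hcp _ _ hEDnn
        · apply mul_le_mul hP2 (mul_le_mul hdγ hP4 hRnn hmδnn)
            (mul_nonneg (norm_nonneg _) hRnn)
            (mul_nonneg hlc.le (Real.rpow_nonneg hrrpos.le _))
        · exact mul_nonneg hlogfac_nn (mul_nonneg (norm_nonneg _) hRnn)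
      refine le_trans step ?_
      -- collapse powers of rr
      have hcollapse : (Eb * (Dq * rr δ θ u ^ (-a))) *
          ((lc * rr δ θ u ^ (a/4)) * ((max 1 δ) * (M' / rr δ θ u))) =
          (Eb * Dq * lc * (max 1 δ) * M') * rr δ θ u ^ (-(3*a/4+1)) := by
        rw [show M' / rr δ θ u = M' * rr δ θ u ^ (-1:ℝ) from by
          rw [Real.rpow_neg_one, ← div_eq_mul_inv]]
        rw [show (Eb * (Dq * rr δ θ u ^ (-a))) * ((lc * rr δ θ u ^ (a/4)) *
            ((max 1 δ) * (M' * rr δ θ u ^ (-1:ℝ)))) =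
            (Eb * Dq * lc * (max 1 δ) * M') *
              (rr δ θ u ^ (-a) * rr δ θ u ^ (a/4) * rr δ θ u ^ (-1:ℝ)) from by ring]
        rw [← Real.rpow_add hrrpos, ← Real.rpow_add hrrpos]
        congr 1
        ring
      rw [hcollapse]
      have hKKnn : (0:ℝ) ≤ Eb * Dq * lc * (max 1 δ) * M' := by
        have h3 : (0:ℝ) ≤ max 1 δ := le_trans zero_le_one (le_max_left _ _)
        exact mul_nonneg (mul_nonneg (mul_nonneg (mul_nonneg hEb.le
          (by linarith [hDq1])) hlc.le) h3) hM'nn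
      have h1u : (0:ℝ) < 1 + |u| := by positivity
      have hstep1 : rr δ θ u ^ (-(3*a/4+1)) ≤ ((1+|u|)/4 : ℝ) ^ (-(3*a/4+1)) :=
        Real.rpow_le_rpow_of_nonpos (by positivity) hge4 (by linarith)
      have hstep2 : ((1+|u|)/4 : ℝ) ^ (-(3*a/4+1)) =
          (1+|u|) ^ (-(3*a/4+1)) * 4 ^ (3*a/4+1) := by
        rw [Real.div_rpow h1u.le (by norm_num : (0:ℝ) ≤ 4)]
        rw [Real.rpow_neg (by norm_num : (0:ℝ) ≤ 4) (3*a/4+1)]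
        rw [div_eq_mul_inv, inv_inv]
      have hstep3 : ((1+|u|) : ℝ) ^ (-(3*a/4+1)) ≤ (1+|u|) ^ (-s) :=
        Real.rpow_le_rpow_of_exponent_le (by linarith [abs_nonneg u])
          (by rw [hsdef]; linarith)
      calc (Eb * Dq * lc * (max 1 δ) * M') * rr δ θ u ^ (-(3*a/4+1))
          ≤ (Eb * Dq * lc * (max 1 δ) * M') * (((1+|u|)/4 : ℝ) ^ (-(3*a/4+1))) :=
            mul_le_mul_of_nonneg_left hstep1 hKKnn
        _ = B₂ * (1+|u|) ^ (-(3*a/4+1)) := by rw [hstep2, hB₂def]; ring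
        _ ≤ B₂ * (1+|u|) ^ (-s) := mul_le_mul_of_nonneg_left hstep3 hB₂nn
        _ ≤ bnd u := by
            rw [hbnddef]
            simp only []
            rw [hBdef, add_mul]
            have h0 : (0:ℝ) ≤ B₁ * (1+T) ^ s * (1+|u|) ^ (-s) := by
              apply mul_nonneg (mul_nonneg hB₁nn (Real.rpow_nonneg (by linarith) _))
                (Real.rpow_nonneg h1u.le _)
            linarith
  -- measurability pieces
  have hne : ∀ u, γ u ≠ 0 := fun u => (hmemK u).2
  have hmeas_cpow : ∀ z : ℂ, Measurable fun u => γ u ^ z := by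
    intro z
    have : (fun u => γ u ^ z) = fun u => Complex.exp (Complex.log (γ u) * z) := by
      funext u; exact Complex.cpow_def_of_ne_zero (hne u) z
    rw [this]
    exact Complex.continuous_exp.measurable.comp
      ((Complex.measurable_log.comp hγcont.measurable).mul_const z)
  have hmeas_deriv : Measurable (deriv γ) := measurable_deriv γ
  have hRγsm : StronglyMeasurable fun u => R (γ u) := hRγcont.stronglyMeasurable
  have hFmeas : ∀ z : ℂ, AEStronglyMeasurable
      (fun u : ℝ => (γ u ^ z * deriv γ u) • R (γ u)) volume := fun z =>
    (((hmeas_cpow z).mul hmeas_deriv).stronglyMeasurable.smul hRγsm).aestronglyMeasurable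
  have hF'meas : AEStronglyMeasurable
      (fun u : ℝ => ((γ u ^ z₀ * Complex.log (γ u) * 1) * deriv γ u) • R (γ u)) volume :=
    ((((((hmeas_cpow z₀).mul (Complex.measurable_log.comp hγcont.measurable)).mul_const
      1).mul hmeas_deriv)).stronglyMeasurable.smul hRγsm).aestronglyMeasurable
  -- bound integrable
  have hbnd_int : Integrable bnd := by
    have h1 : Integrable (fun u : ℝ => (1 + ‖u‖) ^ (-s)) := by
      apply integrable_one_add_norm
      rw [Module.finrank_self]
      push_cast
      linarith
    have h2 := h1.const_mul B
    have heq : (fun u : ℝ => B * (1 + ‖u‖) ^ (-s)) = bnd := by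
      funext u; rw [hbnddef]; simp [Real.norm_eq_abs]
    rwa [heq] at h2
  -- a.e. exclusion of the two corner points
  have hae : ∀ᵐ u : ℝ, u ≠ -θ ∧ u ≠ θ := by
    have hz : volume ({-θ, θ} : Set ℝ) = 0 :=
      Set.Countable.measure_zero ((Set.countable_singleton θ).insert (-θ)) _
    have hz2 := measure_eq_zero_iff_ae_notMem.mp hz
    filter_upwards [hz2] with u hu
    simp only [Set.mem_insert_iff, Set.mem_singleton_iff] at hu
    push_neg at hu
    exact hu
  -- bound on the derivative integrand
  have h_bound : ∀ᵐ u : ℝ, ∀ z ∈ Metric.ball z₀ a,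
      ‖((γ u ^ z * Complex.log (γ u) * 1) * deriv γ u) • R (γ u)‖ ≤ bnd u := by
    filter_upwards [hae] with u hu z hz
    have hlog := log_abs_bound δ θ hδ hθ u a ha
    have hc1 : (0:ℝ) ≤ ‖deriv γ u‖ * ‖R (γ u)‖ :=
      mul_nonneg (norm_nonneg _) (norm_nonneg _)
    refine le_trans ?_ (master u hu.1 hu.2 z hz)
    calc ‖((γ u ^ z * Complex.log (γ u) * 1) * deriv γ u) • R (γ u)‖
        ≤ ‖(γ u ^ z * Complex.log (γ u) * 1) * deriv γ u‖ * ‖R (γ u)‖ :=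
          ContinuousLinearMap.opNorm_smul_le _ _
      _ = ‖γ u ^ z‖ * (‖Complex.log (γ u)‖ *
            (‖deriv γ u‖ * ‖R (γ u)‖)) := by
          rw [norm_mul, norm_mul, norm_mul]
          simp only [norm_one]
          ring
      _ ≤ ‖γ u ^ z‖ * ((|Real.log δ| + Real.pi + (4/a) * rr δ θ u ^ (a/4)) *
            (‖deriv γ u‖ * ‖R (γ u)‖)) := by
          exact mul_le_mul_of_nonneg_left (mul_le_mul_of_nonneg_right hlog hc1)
            (norm_nonneg _)
  -- integrability of the integrand at z₀
  have hFz₀_int : Integrable (fun u : ℝ => (γ u ^ z₀ * deriv γ u) • R (γ u)) := by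
    apply Integrable.mono' hbnd_int (hFmeas z₀)
    filter_upwards [hae] with u hu
    have hz₀ball : z₀ ∈ Metric.ball z₀ a := Metric.mem_ball_self ha
    have hc1 : (0:ℝ) ≤ ‖deriv γ u‖ * ‖R (γ u)‖ :=
      mul_nonneg (norm_nonneg _) (norm_nonneg _)
    have hL1 : (1:ℝ) ≤ |Real.log δ| + Real.pi + (4/a) * rr δ θ u ^ (a/4) := by
      have h1 : (0:ℝ) ≤ (4/a) * rr δ θ u ^ (a/4) :=
        mul_nonneg (by positivity) (Real.rpow_nonneg (rr_pos δ θ hδ u).le _)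
      linarith [abs_nonneg (Real.log δ), Real.pi_gt_three]
    refine le_trans ?_ (master u hu.1 hu.2 z₀ hz₀ball)
    calc ‖(γ u ^ z₀ * deriv γ u) • R (γ u)‖
        ≤ ‖γ u ^ z₀ * deriv γ u‖ * ‖R (γ u)‖ := ContinuousLinearMap.opNorm_smul_le _ _
      _ = ‖γ u ^ z₀‖ * (‖deriv γ u‖ * ‖R (γ u)‖) := by
          rw [norm_mul]
          ring
      _ ≤ ‖γ u ^ z₀‖ * ((|Real.log δ| + Real.pi + (4/a) * rr δ θ u ^ (a/4)) *
            (‖deriv γ u‖ * ‖R (γ u)‖)) := by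
          exact mul_le_mul_of_nonneg_left (le_mul_of_one_le_left hc1 hL1)
            (norm_nonneg _)
  -- holomorphy of the parametrized integrand
  have h_diff : ∀ᵐ u : ℝ, ∀ z ∈ Metric.ball z₀ a,
      HasDerivAt (fun z : ℂ => (γ u ^ z * deriv γ u) • R (γ u))
        (((γ u ^ z * Complex.log (γ u) * 1) * deriv γ u) • R (γ u)) z := by
    apply Filter.Eventually.of_forall
    intro u z hz
    have h1 : HasDerivAt (fun z : ℂ => γ u ^ z) (γ u ^ z * Complex.log (γ u) * 1) z :=
      (hasDerivAt_id z).const_cpow (Or.inl (hne u))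
    exact (h1.mul_const (deriv γ u)).smul_const (R (γ u))
  -- dominated-convergence differentiation under the integral sign
  have main := hasDerivAt_integral_of_dominated_loc_of_deriv_le (Metric.ball_mem_nhds z₀ ha)
    (Filter.Eventually.of_forall hFmeas) hFz₀_int hF'meas h_bound hbnd_int h_diff
  have hdiff : DifferentiableAt ℂ
      (fun z : ℂ => ∫ u : ℝ, (γ u ^ z * deriv γ u) • R (γ u)) z₀ :=
    main.2.differentiableAt
  exact (hdiff.const_smul (2 * (Real.pi : ℂ) * Complex.I)⁻¹).differentiableWithinAt
end

section
/- Let n ≥ 0 be an integer, β ∈ ℝ, N > n + 1 + |β|, and −1 ≤ σ ≤ 0. The kernel k(t,s) = χ_{[0,1]}(t) · (t/s)^N t^{−n−1−σ} for s > t (and 0 for s ≤ t) satisfies the Schur test bounds: ∫₀^∞ t^β k(t,s) s^{−β} s^n ds ≤ C and ∫₀^∞ t^β k(t,s) s^{−β} t^n dt ≤ C for a constant C independent of σ, and hence the associated integral operator u ↦ ∫ k(·,s)u(s)s^n ds is bounded on t^β L^p((0,∞), t^n dt) uniformly in −1 ≤ σ ≤ 0, for every 1 < p < ∞. -/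
open MeasureTheory Set ENNReal

/-- The kernel `k(t,s) = χ_{[0,1]}(t) (t/s)^N t^{-n-1-σ}` for `s > t` and `0` for `s ≤ t`. -/
noncomputable def schurKernel (n : ℕ) (N σ t s : ℝ) : ℝ :=
  if t ≤ 1 ∧ t < s then (t/s) ^ N * t ^ (-(n:ℝ) - 1 - σ) else 0

lemma schurKernel_nonneg {n : ℕ} {N σ t s : ℝ} (ht : 0 ≤ t) (hs : 0 ≤ s) :
    0 ≤ schurKernel n N σ t s := by
  unfold schurKernel
  split
  · exact mul_nonneg (Real.rpow_nonneg (div_nonneg ht hs) _) (Real.rpow_nonneg ht _)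
  · exact le_rfl

lemma schurKernel_measurable (n : ℕ) (N σ : ℝ) :
    Measurable (Function.uncurry (schurKernel n N σ)) := by
  unfold schurKernel Function.uncurry
  refine Measurable.ite ?_
    (((measurable_fst.div measurable_snd).pow measurable_const).mul
      (measurable_fst.pow measurable_const)) measurable_const
  exact (measurableSet_le measurable_fst measurable_const).inter
    (measurableSet_lt measurable_fst measurable_snd)

lemma lint_Ioi_rpow {a c : ℝ} (ha : a < -1) (hc : 0 < c) :
    ∫⁻ s in Ioi c, ENNReal.ofReal (s ^ a) = ENNReal.ofReal (c ^ (a+1) / (-(a+1))) := by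
  rw [← ofReal_integral_eq_lintegral_ofReal (integrableOn_Ioi_rpow_of_lt ha hc)
    (ae_restrict_of_forall_mem measurableSet_Ioi fun s hs =>
      Real.rpow_nonneg (le_of_lt (hc.trans hs)) a)]
  rw [integral_Ioi_rpow_of_lt ha hc, div_neg, neg_div]

lemma lint_Ioc_rpow {a m : ℝ} (ha : -1 < a) (hm : 0 < m) :
    ∫⁻ t in Ioc 0 m, ENNReal.ofReal (t ^ a) = ENNReal.ofReal (m ^ (a+1) / (a+1)) := by
  have hint : IntegrableOn (fun t : ℝ => t ^ a) (Ioc 0 m) :=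
    (intervalIntegrable_iff_integrableOn_Ioc_of_le hm.le).1
      (intervalIntegral.intervalIntegrable_rpow' ha)
  rw [← ofReal_integral_eq_lintegral_ofReal hint
    (ae_restrict_of_forall_mem measurableSet_Ioc fun t ht =>
      Real.rpow_nonneg ht.1.le a)]
  rw [← intervalIntegral.integral_of_le hm.le, integral_rpow (Or.inl ha)]
  congr 1
  rw [Real.zero_rpow (by linarith)]
  ring

lemma schur_row (n : ℕ) (β N : ℝ) (hN : (n:ℝ) + 1 + |β| < N) (γ : ℝ) (hγ : |γ| ≤ |β|)
    (σ : ℝ) (hσ2 : σ ≤ 0) (t : ℝ) (ht : 0 < t) :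
    ∫⁻ s in Ioi (0:ℝ),
        ENNReal.ofReal (t ^ γ * schurKernel n N σ t s * s ^ (-γ) * s ^ (n:ℝ)) ≤
      ENNReal.ofReal ((N - |β| - (n:ℝ) - 1)⁻¹) := by
  have habs : -|β| ≤ γ := (abs_le.1 hγ).1
  have hD : 0 < N - |β| - (n:ℝ) - 1 := by linarith
  by_cases ht1 : t ≤ 1
  · have hNg : 0 < N + γ - (n:ℝ) - 1 := by linarith
    set a : ℝ := (n:ℝ) - γ - N with ha_def
    have ha : a < -1 := by rw [ha_def]; linarith
    set A : ℝ := t ^ (γ + N - (n:ℝ) - 1 - σ) with hA_def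
    have hA : 0 ≤ A := Real.rpow_nonneg ht.le _
    rw [show Ioi (0:ℝ) = Ioc 0 t ∪ Ioi t from (Ioc_union_Ioi_eq_Ioi ht.le).symm,
      lintegral_union measurableSet_Ioi (Ioc_disjoint_Ioi le_rfl)]
    have h1 : ∫⁻ s in Ioc (0:ℝ) t,
        ENNReal.ofReal (t ^ γ * schurKernel n N σ t s * s ^ (-γ) * s ^ (n:ℝ)) = 0 := by
      rw [setLIntegral_congr_fun measurableSet_Ioc
        (fun s hs => ?_), lintegral_zero]
      rw [schurKernel, if_neg (fun h => absurd h.2 (not_lt.2 hs.2))]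
      simp
    rw [h1, zero_add]
    have h2 : ∫⁻ s in Ioi t,
        ENNReal.ofReal (t ^ γ * schurKernel n N σ t s * s ^ (-γ) * s ^ (n:ℝ))
        = ∫⁻ s in Ioi t, ENNReal.ofReal (A * s ^ a) := by
      refine setLIntegral_congr_fun measurableSet_Ioi (fun s hs => ?_)
      have hst : t < s := hs
      have hs0 : 0 < s := ht.trans hst
      congr 1
      rw [schurKernel, if_pos ⟨ht1, hst⟩, Real.div_rpow ht.le hs0.le, div_eq_mul_inv,
        ← Real.rpow_neg hs0.le]
      rw [show t ^ γ * (t ^ N * s ^ (-N) * t ^ (-(n:ℝ) - 1 - σ)) * s ^ (-γ) * s ^ (n:ℝ)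
          = (t ^ γ * t ^ N * t ^ (-(n:ℝ) - 1 - σ)) * (s ^ (-N) * s ^ (-γ) * s ^ (n:ℝ)) by ring]
      rw [← Real.rpow_add ht, ← Real.rpow_add ht, ← Real.rpow_add hs0, ← Real.rpow_add hs0]
      rw [hA_def, ha_def]
      congr 1 <;> [skip; congr 1] <;> ring
    rw [h2]
    have h3 : ∫⁻ s in Ioi t, ENNReal.ofReal (A * s ^ a)
        = ENNReal.ofReal A * ENNReal.ofReal (t ^ (a+1) / (-(a+1))) := by
      simp_rw [ENNReal.ofReal_mul hA]
      rw [lintegral_const_mul' _ _ ofReal_ne_top, lint_Ioi_rpow ha ht]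
    rw [h3, ← ENNReal.ofReal_mul hA]
    refine ENNReal.ofReal_le_ofReal ?_
    have e1 : A * t ^ (a+1) = t ^ (-σ) := by
      rw [hA_def, ← Real.rpow_add ht]; congr 1; rw [ha_def]; ring
    have ht2 : t ^ (-σ) ≤ 1 := Real.rpow_le_one ht.le ht1 (neg_nonneg.2 hσ2)
    have ht3 : 0 ≤ t ^ (-σ) := Real.rpow_nonneg ht.le _
    calc A * (t ^ (a+1) / (-(a+1))) = t ^ (-σ) / (-(a+1)) := by rw [← mul_div_assoc, e1]
      _ ≤ 1 / (N - |β| - (n:ℝ) - 1) :=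
          div_le_div₀ zero_le_one ht2 hD (by rw [ha_def]; linarith)
      _ = (N - |β| - (n:ℝ) - 1)⁻¹ := one_div _
  · have h0 : ∀ s : ℝ, t ^ γ * schurKernel n N σ t s * s ^ (-γ) * s ^ (n:ℝ) = 0 := by
      intro s
      rw [schurKernel, if_neg (fun h => ht1 h.1)]
      ring
    simp only [h0, ENNReal.ofReal_zero, lintegral_zero]
    exact zero_le

lemma schur_col (n : ℕ) (β N : ℝ) (hN : (n:ℝ) + 1 + |β| < N) (γ : ℝ) (hγ : |γ| ≤ |β|)
    (σ : ℝ) (hσ2 : σ ≤ 0) (s : ℝ) (hs : 0 < s) :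
    ∫⁻ t in Ioi (0:ℝ),
        ENNReal.ofReal (t ^ γ * schurKernel n N σ t s * s ^ (-γ) * t ^ (n:ℝ)) ≤
      ENNReal.ofReal ((N - |β| - (n:ℝ) - 1)⁻¹) := by
  have habs : -|β| ≤ γ := (abs_le.1 hγ).1
  have hD : 0 < N - |β| - (n:ℝ) - 1 := by linarith
  set m : ℝ := min 1 s with hm_def
  have hm : 0 < m := lt_min one_pos hs
  have hm1 : m ≤ 1 := min_le_left _ _
  have hms : m ≤ s := min_le_right _ _
  set b : ℝ := γ + N - 1 - σ with hb_def
  have hb : -1 < b := by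
    rw [hb_def]
    nlinarith [Nat.cast_nonneg (α := ℝ) n]
  have hb1 : 0 < b + 1 := by linarith
  set B : ℝ := s ^ (-γ - N) with hB_def
  have hB : 0 ≤ B := Real.rpow_nonneg hs.le _
  rw [show Ioi (0:ℝ) = Ioc 0 m ∪ Ioi m from (Ioc_union_Ioi_eq_Ioi hm.le).symm,
    lintegral_union measurableSet_Ioi (Ioc_disjoint_Ioi le_rfl)]
  have h1 : ∫⁻ t in Ioi m,
      ENNReal.ofReal (t ^ γ * schurKernel n N σ t s * s ^ (-γ) * t ^ (n:ℝ)) = 0 := by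
    rw [setLIntegral_congr_fun measurableSet_Ioi (fun t htm => ?_), lintegral_zero]
    have htm' : m < t := htm
    rw [schurKernel, if_neg, mul_zero, zero_mul, zero_mul, ENNReal.ofReal_zero]
    rintro ⟨ht1, hts⟩
    exact absurd (le_min ht1 hts.le) (not_le.2 htm')
  have h2 : ∫⁻ t in Ioc (0:ℝ) m,
      ENNReal.ofReal (t ^ γ * schurKernel n N σ t s * s ^ (-γ) * t ^ (n:ℝ))
      = ∫⁻ t in Ioc (0:ℝ) m, ENNReal.ofReal (B * t ^ b) := by
    refine setLIntegral_congr_fun_ae measurableSet_Ioc ?_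
    have hae : ∀ᵐ t : ℝ, t ≠ m := by
      refine ae_iff.2 ?_
      simpa using measure_singleton m
    filter_upwards [hae] with t htm hmem
    have ht0 : 0 < t := hmem.1
    have htm' : t < m := lt_of_le_of_ne hmem.2 htm
    have hts : t < s := lt_of_lt_of_le htm' hms
    have ht1 : t ≤ 1 := le_trans htm'.le hm1
    congr 1
    rw [schurKernel, if_pos ⟨ht1, hts⟩, Real.div_rpow ht0.le hs.le, div_eq_mul_inv,
      ← Real.rpow_neg hs.le]
    rw [show t ^ γ * (t ^ N * s ^ (-N) * t ^ (-(n:ℝ) - 1 - σ)) * s ^ (-γ) * t ^ (n:ℝ)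
        = (s ^ (-N) * s ^ (-γ)) * (t ^ γ * t ^ N * t ^ (-(n:ℝ) - 1 - σ) * t ^ (n:ℝ)) by ring]
    rw [← Real.rpow_add hs, ← Real.rpow_add ht0, ← Real.rpow_add ht0, ← Real.rpow_add ht0]
    rw [hB_def, hb_def]
    congr 1 <;> [congr 1; congr 1] <;> ring
  rw [h1, add_zero, h2]
  have h3 : ∫⁻ t in Ioc (0:ℝ) m, ENNReal.ofReal (B * t ^ b)
      = ENNReal.ofReal (B * (m ^ (b+1) / (b+1))) := by
    simp_rw [ENNReal.ofReal_mul hB]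
    rw [lintegral_const_mul' _ _ ofReal_ne_top, lint_Ioc_rpow hb hm, ← ENNReal.ofReal_mul hB]
  rw [h3]
  refine ENNReal.ofReal_le_ofReal ?_
  have key : B * m ^ (b+1) ≤ 1 := by
    rcases le_or_gt s 1 with hcase | hcase
    · have hms' : m = s := min_eq_right hcase
      rw [hms', hB_def, ← Real.rpow_add hs]
      refine Real.rpow_le_one hs.le hcase ?_
      rw [hb_def]; linarith
    · have hm1' : m = 1 := min_eq_left hcase.le
      rw [hm1', Real.one_rpow, mul_one, hB_def]
      refine Real.rpow_le_one_of_one_le_of_nonpos hcase.le ?_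
      nlinarith [Nat.cast_nonneg (α := ℝ) n]
  have hBm : 0 ≤ B * m ^ (b+1) := mul_nonneg hB (Real.rpow_nonneg hm.le _)
  calc B * (m ^ (b+1) / (b+1)) = (B * m ^ (b+1)) / (b+1) := by rw [mul_div_assoc]
    _ ≤ 1 / (N - |β| - (n:ℝ) - 1) := by
        refine div_le_div₀ zero_le_one key hD ?_
        rw [hb_def]
        nlinarith [Nat.cast_nonneg (α := ℝ) n]
    _ = (N - |β| - (n:ℝ) - 1)⁻¹ := one_div _

lemma schur_test {α : Type*} [MeasurableSpace α] {μ : Measure α} [SigmaFinite μ]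
    {K : α → α → ℝ≥0∞} (hK : Measurable (Function.uncurry K))
    (hKfin : ∀ t s, K t s ≠ ⊤)
    {C : ℝ≥0∞} (hC0 : C ≠ 0) (hCt : C ≠ ⊤)
    (hrow : ∀ t, ∫⁻ s, K t s ∂μ ≤ C) (hcol : ∀ s, ∫⁻ t, K t s ∂μ ≤ C)
    {p : ℝ} (hp : 1 < p) {v : α → ℝ≥0∞} (hv : Measurable v) :
    ∫⁻ t, (∫⁻ s, K t s * v s ∂μ) ^ p ∂μ ≤ C ^ p * ∫⁻ t, v t ^ p ∂μ := by
  have hp0 : 0 < p := lt_trans one_pos hp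
  set q : ℝ := Real.conjExponent p with hq_def
  have hpq : p.HolderConjugate q := Real.HolderConjugate.conjExponent hp
  have hq0 : 0 < q := hpq.symm.pos
  have hKs : ∀ s, Measurable fun t => K t s := fun s =>
    hK.comp (measurable_id.prodMk measurable_const)
  have hKt : ∀ t, Measurable (K t) := fun t =>
    hK.comp (measurable_const.prodMk measurable_id)
  -- pointwise Hölder estimate
  have stepA : ∀ t, (∫⁻ s, K t s * v s ∂μ) ^ p ≤
      C ^ (p / q) * ∫⁻ s, K t s * v s ^ p ∂μ := by
    intro t
    have key : ∀ s, K t s * v s = (K t s) ^ (1/q) * ((K t s) ^ (1/p) * v s) := by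
      intro s
      rcases eq_or_ne (K t s) 0 with h0 | h0
      · simp only [h0, zero_mul]
        rw [ENNReal.zero_rpow_of_pos (by positivity), zero_mul]
      · rw [← mul_assoc, ← ENNReal.rpow_add _ _ h0 (hKfin t s)]
        rw [show 1/q + 1/p = 1 from by
          rw [one_div, one_div, add_comm]; exact hpq.inv_add_inv_eq_one]
        rw [ENNReal.rpow_one]
    have hold : ∫⁻ s, K t s * v s ∂μ ≤
        (∫⁻ s, K t s ∂μ) ^ (1/q) * (∫⁻ s, K t s * v s ^ p ∂μ) ^ (1/p) := by
      calc ∫⁻ s, K t s * v s ∂μ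
          = ∫⁻ s, ((fun s => (K t s) ^ (1/q)) * fun s => (K t s) ^ (1/p) * v s) s ∂μ := by
            refine lintegral_congr fun s => ?_
            simp only [Pi.mul_apply]
            exact key s
        _ ≤ (∫⁻ s, ((K t s) ^ (1/q)) ^ q ∂μ) ^ (1/q) *
            (∫⁻ s, ((K t s) ^ (1/p) * v s) ^ p ∂μ) ^ (1/p) := by
            refine ENNReal.lintegral_mul_le_Lp_mul_Lq μ hpq.symm ?_ ?_
            · exact ((hKt t).pow_const _).aemeasurable
            · exact (((hKt t).pow_const _).mul hv).aemeasurable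
        _ = (∫⁻ s, K t s ∂μ) ^ (1/q) * (∫⁻ s, K t s * v s ^ p ∂μ) ^ (1/p) := by
            congr 1
            · congr 1
              refine lintegral_congr fun s => ?_
              rw [← ENNReal.rpow_mul, one_div_mul_cancel hq0.ne', ENNReal.rpow_one]
            · congr 1
              refine lintegral_congr fun s => ?_
              rw [ENNReal.mul_rpow_of_nonneg _ _ hp0.le, ← ENNReal.rpow_mul,
                one_div_mul_cancel hp0.ne', ENNReal.rpow_one]
    calc (∫⁻ s, K t s * v s ∂μ) ^ p
        ≤ ((∫⁻ s, K t s ∂μ) ^ (1/q) * (∫⁻ s, K t s * v s ^ p ∂μ) ^ (1/p)) ^ p :=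
          ENNReal.rpow_le_rpow hold hp0.le
      _ = ((∫⁻ s, K t s ∂μ) ^ (1/q)) ^ p * (∫⁻ s, K t s * v s ^ p ∂μ) := by
          rw [ENNReal.mul_rpow_of_nonneg _ _ hp0.le, ← ENNReal.rpow_mul (∫⁻ s, K t s * v s ^ p ∂μ),
            one_div_mul_cancel hp0.ne', ENNReal.rpow_one]
      _ ≤ (C ^ (1/q)) ^ p * (∫⁻ s, K t s * v s ^ p ∂μ) := by
          gcongr
          exact hrow t
      _ = C ^ (p / q) * ∫⁻ s, K t s * v s ^ p ∂μ := by
          rw [← ENNReal.rpow_mul, one_div, inv_mul_eq_div]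
  -- integrate and swap
  have swap : ∫⁻ t, ∫⁻ s, K t s * v s ^ p ∂μ ∂μ = ∫⁻ s, (∫⁻ t, K t s ∂μ) * v s ^ p ∂μ := by
    rw [lintegral_lintegral_swap]
    · refine lintegral_congr fun s => ?_
      rw [lintegral_mul_const'' _ (hKs s).aemeasurable]
    · exact (hK.mul ((hv.comp measurable_snd).pow_const p)).aemeasurable
  calc ∫⁻ t, (∫⁻ s, K t s * v s ∂μ) ^ p ∂μ
      ≤ ∫⁻ t, C ^ (p / q) * ∫⁻ s, K t s * v s ^ p ∂μ ∂μ := lintegral_mono stepA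
    _ = C ^ (p / q) * ∫⁻ t, ∫⁻ s, K t s * v s ^ p ∂μ ∂μ :=
        lintegral_const_mul' _ _ (ENNReal.rpow_ne_top_of_nonneg (by positivity) hCt)
    _ = C ^ (p / q) * ∫⁻ s, (∫⁻ t, K t s ∂μ) * v s ^ p ∂μ := by rw [swap]
    _ ≤ C ^ (p / q) * ∫⁻ s, C * v s ^ p ∂μ := by
        gcongr with s
        exact hcol s
    _ = C ^ (p / q) * (C * ∫⁻ s, v s ^ p ∂μ) := by rw [lintegral_const_mul' _ _ hCt]
    _ = C ^ p * ∫⁻ t, v t ^ p ∂μ := by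
        rw [← mul_assoc]
        congr 1
        have hdq : p / q = p - 1 := by
          rw [hq_def, Real.conjExponent]
          field_simp
        calc C ^ (p/q) * C = C ^ (p/q) * C ^ (1:ℝ) := by rw [ENNReal.rpow_one]
          _ = C ^ (p/q + 1) := (ENNReal.rpow_add _ _ hC0 hCt).symm
          _ = C ^ p := by rw [hdq]; congr 1; ring

/-- For `N > n + 1 + |β|` the kernel `k(t,s) = χ_{[0,1]}(t) (t/s)^N t^{-n-1-σ}` (for `s > t`,
`0` otherwise) satisfies the Schur test bounds
`∫₀^∞ t^β k(t,s) s^{-β} s^n ds ≤ C` and `∫₀^∞ t^β k(t,s) s^{-β} t^n dt ≤ C`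
for a constant `C` independent of `σ ∈ [-1,0]`, and hence the associated integral operator
`u ↦ ∫ k(·,s) u(s) s^n ds` is bounded on `t^β L^p((0,∞), t^n dt)` uniformly in
`-1 ≤ σ ≤ 0`, for every `1 < p < ∞`. -/
theorem schur_kernel_bounded (n : ℕ) (β N : ℝ) (hN : (n:ℝ) + 1 + |β| < N) :
    ∃ C : ℝ, 0 ≤ C ∧ ∀ σ : ℝ, -1 ≤ σ → σ ≤ 0 →
      (∀ t ∈ Ioi (0:ℝ),
        ∫⁻ s in Ioi (0:ℝ),
          ENNReal.ofReal (t ^ β * schurKernel n N σ t s * s ^ (-β) * s ^ (n:ℝ)) ≤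
        ENNReal.ofReal C) ∧
      (∀ s ∈ Ioi (0:ℝ),
        ∫⁻ t in Ioi (0:ℝ),
          ENNReal.ofReal (t ^ β * schurKernel n N σ t s * s ^ (-β) * t ^ (n:ℝ)) ≤
        ENNReal.ofReal C) ∧
      (∀ p : ℝ, 1 < p → ∀ u : ℝ → ℝ≥0∞, Measurable u →
        ∫⁻ t in Ioi (0:ℝ),
            (ENNReal.ofReal (t ^ (-β)) *
              ∫⁻ s in Ioi (0:ℝ),
                ENNReal.ofReal (schurKernel n N σ t s) * u s * ENNReal.ofReal (s ^ (n:ℝ))) ^ p *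
            ENNReal.ofReal (t ^ (n:ℝ)) ≤
          ENNReal.ofReal C ^ p *
            ∫⁻ t in Ioi (0:ℝ),
              (ENNReal.ofReal (t ^ (-β)) * u t) ^ p * ENNReal.ofReal (t ^ (n:ℝ))) := by
  have hD : 0 < N - |β| - (n:ℝ) - 1 := by
    have := abs_nonneg β; linarith
  set C : ℝ := (N - |β| - (n:ℝ) - 1)⁻¹ with hC_def
  have hCpos : 0 < C := inv_pos.2 hD
  refine ⟨C, hCpos.le, fun σ hσ1 hσ2 => ?_⟩
  refine ⟨fun t ht => schur_row n β N hN β le_rfl σ hσ2 t ht,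
    fun s hs => schur_col n β N hN β le_rfl σ hσ2 s hs, ?_⟩
  intro p hp u hu
  -- setup
  set μ : Measure ℝ :=
    (volume.restrict (Ioi (0:ℝ))).withDensity (fun x => ENNReal.ofReal (x ^ (n:ℝ))) with hμ
  have hf : Measurable fun x : ℝ => ENNReal.ofReal (x ^ (n:ℝ)) :=
    (measurable_id.pow measurable_const).ennreal_ofReal
  set K : ℝ → ℝ → ℝ≥0∞ := fun t s => if 0 < t ∧ 0 < s then
      ENNReal.ofReal (t ^ (-β)) * ENNReal.ofReal (schurKernel n N σ t s) *
        ENNReal.ofReal (s ^ β) else 0 with hK_def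
  set v : ℝ → ℝ≥0∞ := fun s => ENNReal.ofReal (s ^ (-β)) * u s with hv_def
  have hKmeas : Measurable (Function.uncurry K) := by
    rw [hK_def]
    refine Measurable.ite ?_ ?_ measurable_const
    · exact (measurableSet_lt measurable_const measurable_fst).inter
        (measurableSet_lt measurable_const measurable_snd)
    · exact (((measurable_fst.pow measurable_const).ennreal_ofReal.mul
        (schurKernel_measurable n N σ).ennreal_ofReal).mul
        (measurable_snd.pow measurable_const).ennreal_ofReal)
  have hKfin : ∀ t s, K t s ≠ ⊤ := by
    intro t s
    rw [hK_def]
    dsimp only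
    split
    · exact ENNReal.mul_ne_top (ENNReal.mul_ne_top ofReal_ne_top ofReal_ne_top) ofReal_ne_top
    · exact zero_ne_top
  have hvmeas : Measurable v :=
    (measurable_id.pow measurable_const).ennreal_ofReal.mul hu
  have hCE0 : ENNReal.ofReal C ≠ 0 := by
    simp only [ne_eq, ENNReal.ofReal_eq_zero, not_le]
    exact hCpos
  -- row bound for K
  have hrow : ∀ t, ∫⁻ s, K t s ∂μ ≤ ENNReal.ofReal C := by
    intro t
    by_cases ht : 0 < t
    · have hKt : Measurable (K t) := hKmeas.comp (measurable_const.prodMk measurable_id)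
      rw [hμ, lintegral_withDensity_eq_lintegral_mul _ hf hKt]
      have heq : ∫⁻ s in Ioi (0:ℝ), ((fun x => ENNReal.ofReal (x ^ (n:ℝ))) * K t) s
          = ∫⁻ s in Ioi (0:ℝ),
              ENNReal.ofReal (t ^ (-β) * schurKernel n N σ t s * s ^ β * s ^ (n:ℝ)) := by
        refine setLIntegral_congr_fun measurableSet_Ioi (fun s hs => ?_)
        have hs0 : 0 < s := hs
        simp only [Pi.mul_apply, hK_def]
        rw [if_pos (show 0 < t ∧ 0 < s from ⟨ht, hs0⟩)]
        rw [ENNReal.ofReal_mul (mul_nonneg (mul_nonneg (Real.rpow_nonneg ht.le _)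
            (schurKernel_nonneg ht.le hs0.le)) (Real.rpow_nonneg hs0.le _)),
          ENNReal.ofReal_mul (mul_nonneg (Real.rpow_nonneg ht.le _)
            (schurKernel_nonneg ht.le hs0.le)),
          ENNReal.ofReal_mul (Real.rpow_nonneg ht.le _)]
        ring
      rw [heq]
      have := schur_row n β N hN (-β) (by rw [abs_neg]) σ hσ2 t ht
      simpa only [neg_neg] using this
    · have hzero : ∀ s, K t s = 0 := fun s => by
        rw [hK_def]; exact if_neg (fun h => ht h.1)
      simp only [hzero, lintegral_zero]
      exact zero_le
  -- column bound for K
  have hcol : ∀ s, ∫⁻ t, K t s ∂μ ≤ ENNReal.ofReal C := by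
    intro s
    by_cases hs : 0 < s
    · have hKs : Measurable fun t => K t s :=
        hKmeas.comp (measurable_id.prodMk measurable_const)
      rw [hμ, lintegral_withDensity_eq_lintegral_mul _ hf hKs]
      have heq : ∫⁻ t in Ioi (0:ℝ),
            ((fun x => ENNReal.ofReal (x ^ (n:ℝ))) * fun t => K t s) t
          = ∫⁻ t in Ioi (0:ℝ),
              ENNReal.ofReal (t ^ (-β) * schurKernel n N σ t s * s ^ β * t ^ (n:ℝ)) := by
        refine setLIntegral_congr_fun measurableSet_Ioi (fun t ht => ?_)
        have ht0 : 0 < t := ht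
        simp only [Pi.mul_apply, hK_def]
        rw [if_pos (show 0 < t ∧ 0 < s from ⟨ht0, hs⟩)]
        rw [ENNReal.ofReal_mul (mul_nonneg (mul_nonneg (Real.rpow_nonneg ht0.le _)
            (schurKernel_nonneg ht0.le hs.le)) (Real.rpow_nonneg hs.le _)),
          ENNReal.ofReal_mul (mul_nonneg (Real.rpow_nonneg ht0.le _)
            (schurKernel_nonneg ht0.le hs.le)),
          ENNReal.ofReal_mul (Real.rpow_nonneg ht0.le _)]
        ring
      rw [heq]
      have := schur_col n β N hN (-β) (by rw [abs_neg]) σ hσ2 s hs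
      simpa only [neg_neg] using this
    · have hzero : ∀ t, K t s = 0 := fun t => by
        rw [hK_def]; exact if_neg (fun h => hs h.2)
      simp only [hzero, lintegral_zero]
      exact zero_le
  -- the abstract Schur test
  have main := schur_test hKmeas hKfin hCE0 ofReal_ne_top hrow hcol hp hvmeas
  -- identify left-hand side
  have hg : Measurable fun q : ℝ × ℝ => K q.1 q.2 * v q.2 :=
    hKmeas.mul (hvmeas.comp measurable_snd)
  have houter : Measurable fun t => (∫⁻ s, K t s * v s ∂μ) ^ p :=
    (hg.lintegral_prod_right').pow_const p
  have inner_eq : ∀ t : ℝ, 0 < t →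
      ∫⁻ s, K t s * v s ∂μ = ENNReal.ofReal (t ^ (-β)) *
        ∫⁻ s in Ioi (0:ℝ),
          ENNReal.ofReal (schurKernel n N σ t s) * u s * ENNReal.ofReal (s ^ (n:ℝ)) := by
    intro t ht
    have hKt : Measurable fun s => K t s * v s :=
      (hKmeas.comp (measurable_const.prodMk measurable_id)).mul hvmeas
    rw [hμ, lintegral_withDensity_eq_lintegral_mul _ hf hKt,
      ← lintegral_const_mul' _ _ ofReal_ne_top]
    refine setLIntegral_congr_fun measurableSet_Ioi (fun s hs => ?_)
    have hs0 : 0 < s := hs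
    have hcancel : ENNReal.ofReal (s ^ β) * ENNReal.ofReal (s ^ (-β)) = 1 := by
      rw [← ENNReal.ofReal_mul (Real.rpow_nonneg hs0.le _), ← Real.rpow_add hs0,
        add_neg_cancel, Real.rpow_zero, ENNReal.ofReal_one]
    simp only [Pi.mul_apply, hK_def, hv_def]
    rw [if_pos (show 0 < t ∧ 0 < s from ⟨ht, hs0⟩)]
    calc ENNReal.ofReal (s ^ (n:ℝ)) *
          (ENNReal.ofReal (t ^ (-β)) * ENNReal.ofReal (schurKernel n N σ t s) *
            ENNReal.ofReal (s ^ β) * (ENNReal.ofReal (s ^ (-β)) * u s))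
        = (ENNReal.ofReal (s ^ β) * ENNReal.ofReal (s ^ (-β))) *
            (ENNReal.ofReal (t ^ (-β)) * (ENNReal.ofReal (schurKernel n N σ t s) * u s *
              ENNReal.ofReal (s ^ (n:ℝ)))) := by ring
      _ = ENNReal.ofReal (t ^ (-β)) * (ENNReal.ofReal (schurKernel n N σ t s) * u s *
            ENNReal.ofReal (s ^ (n:ℝ))) := by rw [hcancel, one_mul]
  have lhs_eq : ∫⁻ t, (∫⁻ s, K t s * v s ∂μ) ^ p ∂μ
      = ∫⁻ t in Ioi (0:ℝ),
          (ENNReal.ofReal (t ^ (-β)) *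
            ∫⁻ s in Ioi (0:ℝ),
              ENNReal.ofReal (schurKernel n N σ t s) * u s *
                ENNReal.ofReal (s ^ (n:ℝ))) ^ p *
          ENNReal.ofReal (t ^ (n:ℝ)) := by
    rw [hμ, lintegral_withDensity_eq_lintegral_mul _ hf houter]
    refine setLIntegral_congr_fun measurableSet_Ioi (fun t ht => ?_)
    simp only [Pi.mul_apply]
    rw [inner_eq t ht, mul_comm]
  have rhs_eq : ∫⁻ t, v t ^ p ∂μ
      = ∫⁻ t in Ioi (0:ℝ),
          (ENNReal.ofReal (t ^ (-β)) * u t) ^ p * ENNReal.ofReal (t ^ (n:ℝ)) := by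
    rw [hμ, lintegral_withDensity_eq_lintegral_mul _ hf (hvmeas.pow_const p)]
    refine setLIntegral_congr_fun measurableSet_Ioi (fun t ht => ?_)
    simp only [Pi.mul_apply, hv_def]
    rw [mul_comm]
  rw [lhs_eq, rhs_eq] at main
  exact main
end

section
/- Let μ > 0, δ > 0, 0 < θ < π, and k ≥ 0. Suppose b̃(τ, λ) is continuous on ℝ × Λ(δ,θ) with |b̃(τ,λ)| ≤ C (1 + τ² + |λ|^{2/μ})^{(−μ−1−k)/2}. For Re z < 0 and 0 < t ≤ 1 define b_z(t,τ) = t^μ ∫_𝒞 λ^z b̃(τ, t^μ λ) dλ, where 𝒞 is the boundary of Λ(δ,θ). Then |b_z(t,τ)| ≤ C' e^{θ|Im z|} (1+τ²)^{−k/2} uniformly for 0 < t ≤ 1, τ ∈ ℝ, and −1 ≤ Re z < 0. -/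
open MeasureTheory Set Complex

lemma arg_smul_exp {s φ : ℝ} (hs : 0 < s) (h1 : -Real.pi < φ) (h2 : φ ≤ Real.pi) :
    Complex.arg ((s : ℂ) * Complex.exp ((φ : ℂ) * Complex.I)) = φ := by
  rw [Complex.exp_mul_I, Complex.arg_real_mul _ hs, Complex.arg_cos_add_sin_mul_I ⟨h1, h2⟩]

lemma contour_polar {δ θ : ℝ} (hθ : 0 < θ) (u : ℝ) :
    ∃ φ : ℝ, |φ| ≤ θ ∧ (θ < |u| → |φ| = θ) ∧
      keyholeContour δ θ u
        = ((δ + max 0 (|u| - θ) : ℝ) : ℂ) * Complex.exp ((φ : ℂ) * Complex.I) := by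
  unfold keyholeContour
  rcases le_or_gt u (-θ) with h | h
  · refine ⟨θ, by rw [abs_of_pos hθ], fun _ => by rw [abs_of_pos hθ], ?_⟩
    rw [if_pos h]
    have h0 : u ≤ 0 := h.trans (by linarith)
    have : max 0 (|u| - θ) = -(u + θ) := by
      rw [abs_of_nonpos h0, max_eq_right (by linarith)]; ring
    rw [this]; push_cast; ring
  · rcases le_or_gt u θ with h' | h'
    · have hu : |u| ≤ θ := abs_le.2 ⟨by linarith, h'⟩
      refine ⟨-u, by rwa [abs_neg], fun hc => absurd hc (not_lt.2 hu), ?_⟩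
      rw [if_neg (by linarith), if_pos h']
      have : max 0 (|u| - θ) = 0 := max_eq_left (by linarith)
      rw [this]; push_cast; ring_nf
    · refine ⟨-θ, by rw [abs_neg, abs_of_pos hθ], fun _ => by rw [abs_neg, abs_of_pos hθ], ?_⟩
      rw [if_neg (by linarith), if_neg (by linarith)]
      have h0 : 0 ≤ u := by linarith
      have : max 0 (|u| - θ) = u - θ := by
        rw [_root_.abs_of_nonneg h0, max_eq_right (by linarith)]
      rw [this]; push_cast; ring_nf

lemma contour_abs {δ θ : ℝ} (hδ : 0 < δ) (hθ : 0 < θ) (u : ℝ) :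
    ‖keyholeContour δ θ u‖ = δ + max 0 (|u| - θ) := by
  obtain ⟨φ, -, -, h⟩ := contour_polar (δ := δ) hθ u
  have hr : 0 < δ + max 0 (|u| - θ) := by positivity
  rw [h, norm_mul, Complex.norm_real, Complex.norm_exp]
  simp [Real.norm_eq_abs, _root_.abs_of_pos hr]

lemma contour_arg {δ θ : ℝ} (hδ : 0 < δ) (hθ : 0 < θ) (hθ2 : θ < Real.pi) (u : ℝ)
    {c : ℝ} (hc : 0 < c) :
    |Complex.arg ((c : ℂ) * keyholeContour δ θ u)| ≤ θ ∧
      (θ < |u| → θ ≤ |Complex.arg ((c : ℂ) * keyholeContour δ θ u)|) := by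
  obtain ⟨φ, hφ1, hφ2, h⟩ := contour_polar (δ := δ) hθ u
  have hr : 0 < δ + max 0 (|u| - θ) := by positivity
  have harg : Complex.arg ((c : ℂ) * keyholeContour δ θ u) = φ := by
    rw [h, ← mul_assoc, ← Complex.ofReal_mul]
    have h1 : -Real.pi < φ := by
      have := (abs_le.1 hφ1).1; linarith
    have h2 : φ ≤ Real.pi := ((le_abs_self φ).trans hφ1).trans hθ2.le
    exact arg_smul_exp (mul_pos hc hr) h1 h2
  rw [harg]
  exact ⟨hφ1, fun h' => (hφ2 h').ge⟩

lemma contour_mem {δ θ : ℝ} (hδ : 0 < δ) (hθ : 0 < θ) (hθ2 : θ < Real.pi) (u : ℝ)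
    {c : ℝ} (hc : 0 < c) (hc1 : c ≤ 1) :
    (c : ℂ) * keyholeContour δ θ u ∈ keyhole δ θ := by
  rcases le_or_gt (|u|) θ with h | h
  · left
    rw [norm_mul, Complex.norm_real, Real.norm_eq_abs, contour_abs hδ hθ, _root_.abs_of_pos hc,
      max_eq_left (by linarith), add_zero]
    calc c * δ ≤ 1 * δ := by nlinarith
    _ = δ := one_mul δ
  · exact Or.inr ((contour_arg hδ hθ hθ2 u hc).2 h)

lemma contour_deriv {δ θ : ℝ} (hδ : 0 < δ) (hθ : 0 < θ) {u : ℝ} (h1 : u ≠ -θ) (h2 : u ≠ θ) :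
    ‖deriv (keyholeContour δ θ) u‖ ≤ max 1 δ := by
  rcases lt_trichotomy u (-θ) with h | h | h
  · have heq : keyholeContour δ θ =ᶠ[nhds u]
        fun v : ℝ => ((δ - (v + θ) : ℝ) : ℂ) * Complex.exp ((θ : ℂ) * Complex.I) := by
      filter_upwards [Iio_mem_nhds h] with v hv
      have : v ≤ -θ := le_of_lt (mem_Iio.1 hv)
      simp only [keyholeContour, if_pos this]
    have hD : HasDerivAt (fun v : ℝ => ((δ - (v + θ) : ℝ) : ℂ) * Complex.exp ((θ : ℂ) * Complex.I))
        (-Complex.exp ((θ : ℂ) * Complex.I)) u := by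
      have h0 : HasDerivAt (fun v : ℝ => (δ - (v + θ) : ℝ)) (-1) u := by
        simpa using ((hasDerivAt_id u).add_const θ).const_sub δ
      simpa using h0.ofReal_comp.mul_const (Complex.exp ((θ : ℂ) * Complex.I))
    rw [((hD.congr_of_eventuallyEq heq).deriv)]
    simp [Complex.norm_exp]
  · exact absurd h h1
  · rcases lt_trichotomy u θ with h' | h' | h'
    · have heq : keyholeContour δ θ =ᶠ[nhds u]
          fun v : ℝ => ((δ : ℝ) : ℂ) * Complex.exp (-(v : ℂ) * Complex.I) := by
        filter_upwards [Ioo_mem_nhds h h'] with v hv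
        have ha : ¬ v ≤ -θ := not_le.2 hv.1
        simp only [keyholeContour, if_neg ha, if_pos hv.2.le]
      have hD : HasDerivAt (fun v : ℝ => ((δ : ℝ) : ℂ) * Complex.exp (-(v : ℂ) * Complex.I))
          (((δ : ℝ) : ℂ) * (Complex.exp (-(u : ℂ) * Complex.I) * -Complex.I)) u := by
        have hg : HasDerivAt (fun v : ℝ => -(v : ℂ) * Complex.I) (-Complex.I) u := by
          have : HasDerivAt (fun v : ℝ => ((v : ℝ) : ℂ)) 1 u := by
            simpa using (hasDerivAt_id u).ofReal_comp
          simpa using (this.neg).mul_const Complex.I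
        exact (hg.cexp).const_mul _
      rw [((hD.congr_of_eventuallyEq heq).deriv)]
      have : ((-(u : ℂ)) * Complex.I).re = 0 := by simp
      rw [norm_mul, norm_mul, Complex.norm_real, Complex.norm_exp, this]
      simp [_root_.abs_of_pos hδ]
    · exact absurd h' h2
    · have heq : keyholeContour δ θ =ᶠ[nhds u]
          fun v : ℝ => ((δ + (v - θ) : ℝ) : ℂ) * Complex.exp (-(θ : ℂ) * Complex.I) := by
        filter_upwards [Ioi_mem_nhds h'] with v hv
        have hv' : θ < v := mem_Ioi.1 hv
        have hv1 : ¬ v ≤ -θ := by simp only [not_le]; linarith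
        have hv2 : ¬ v ≤ θ := not_le.2 hv'
        simp only [keyholeContour, if_neg hv1, if_neg hv2]
      have hD : HasDerivAt
          (fun v : ℝ => ((δ + (v - θ) : ℝ) : ℂ) * Complex.exp (-(θ : ℂ) * Complex.I))
          (Complex.exp (-(θ : ℂ) * Complex.I)) u := by
        have h0 : HasDerivAt (fun v : ℝ => (δ + (v - θ) : ℝ)) 1 u := by
          simpa using ((hasDerivAt_id u).sub_const θ).const_add δ
        simpa using h0.ofReal_comp.mul_const (Complex.exp (-(θ : ℂ) * Complex.I))
      rw [((hD.congr_of_eventuallyEq heq).deriv)]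
      have : ((-(θ : ℂ)) * Complex.I).re = 0 := by simp
      rw [Complex.norm_exp, this]
      simp

lemma rpow_split (μ k : ℝ) (hμ : 0 < μ) (hk : 0 ≤ k) {t s : ℝ} (ht : 0 < t) (hs : 0 < s)
    (τ : ℝ) :
    (1 + τ ^ 2 + (t ^ μ * s) ^ (2 / μ)) ^ ((-μ - 1 - k) / 2) ≤
      (1 + τ ^ 2) ^ (-k / 2) * min 1 (t ^ (-(μ + 1)) * s ^ (-(1 + 1 / μ))) := by
  have hμ' : μ ≠ 0 := hμ.ne'
  have hA : (1 : ℝ) ≤ 1 + τ ^ 2 := by nlinarith [sq_nonneg τ]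
  have hA0 : (0 : ℝ) < 1 + τ ^ 2 := by linarith
  have htμ : (0 : ℝ) < t ^ μ := Real.rpow_pos_of_pos ht μ
  have hB0 : (0 : ℝ) < (t ^ μ * s) ^ (2 / μ) := Real.rpow_pos_of_pos (mul_pos htμ hs) _
  set B := (t ^ μ * s) ^ (2 / μ) with hBdef
  have hX0 : (0 : ℝ) < 1 + τ ^ 2 + B := by linarith
  have hX1 : (1 : ℝ) ≤ 1 + τ ^ 2 + B := by linarith
  have hsplit : (-μ - 1 - k) / 2 = -k / 2 + -((μ + 1) / 2) := by ring
  rw [hsplit, Real.rpow_add hX0]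
  have h1 : (1 + τ ^ 2 + B) ^ (-k / 2) ≤ (1 + τ ^ 2) ^ (-k / 2) :=
    Real.rpow_le_rpow_of_nonpos hA0 (by linarith) (by linarith)
  have h2 : (1 + τ ^ 2 + B) ^ (-((μ + 1) / 2)) ≤
      min 1 (t ^ (-(μ + 1)) * s ^ (-(1 + 1 / μ))) := by
    refine le_min ?_ ?_
    · exact Real.rpow_le_one_of_one_le_of_nonpos hX1 (by linarith)
    · have hle : (1 + τ ^ 2 + B) ^ (-((μ + 1) / 2)) ≤ B ^ (-((μ + 1) / 2)) :=
        Real.rpow_le_rpow_of_nonpos hB0 (by linarith) (by linarith)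
      refine hle.trans_eq ?_
      rw [hBdef, ← Real.rpow_mul (mul_pos htμ hs).le]
      have he : 2 / μ * -((μ + 1) / 2) = -(1 + 1 / μ) := by field_simp
      rw [he, Real.mul_rpow htμ.le hs.le, ← Real.rpow_mul ht.le]
      congr 1
      have : μ * -(1 + 1 / μ) = -(μ + 1) := by field_simp
      rw [this]
  calc (1 + τ ^ 2 + B) ^ (-k / 2) * (1 + τ ^ 2 + B) ^ (-((μ + 1) / 2))
      ≤ (1 + τ ^ 2) ^ (-k / 2) * min 1 (t ^ (-(μ + 1)) * s ^ (-(1 + 1 / μ))) :=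
        mul_le_mul h1 h2 (Real.rpow_nonneg hX0.le _) (Real.rpow_nonneg hA0.le _)

lemma cpow_abs_bound {w z : ℂ} {δ θ : ℝ} (hδ : 0 < δ) (hw : δ ≤ ‖w‖)
    (harg : |Complex.arg w| ≤ θ) (hz1 : -1 ≤ z.re) (hz2 : z.re ≤ 0) :
    ‖w ^ z‖ ≤ max 1 δ⁻¹ * Real.exp (θ * |z.im|) := by
  refine (Complex.norm_cpow_le w z).trans ?_
  rw [div_eq_mul_inv, ← Real.exp_neg]
  have h1 : ‖w‖ ^ z.re ≤ max 1 δ⁻¹ := by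
    have ha : ‖w‖ ^ z.re ≤ δ ^ z.re :=
      Real.rpow_le_rpow_of_nonpos hδ hw hz2
    refine ha.trans ?_
    rcases le_or_gt 1 δ with h | h
    · exact le_max_of_le_left (Real.rpow_le_one_of_one_le_of_nonpos h hz2)
    · refine le_max_of_le_right ?_
      have := Real.rpow_le_rpow_of_exponent_ge hδ h.le hz1
      rwa [Real.rpow_neg_one] at this
  have h2 : Real.exp (-(Complex.arg w * z.im)) ≤ Real.exp (θ * |z.im|) := by
    refine Real.exp_le_exp.2 ?_
    calc -(Complex.arg w * z.im) ≤ |Complex.arg w * z.im| := neg_le_abs _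
    _ = |Complex.arg w| * |z.im| := abs_mul _ _
    _ ≤ θ * |z.im| := mul_le_mul_of_nonneg_right harg (abs_nonneg _)
  exact mul_le_mul h1 h2 (Real.exp_pos _).le (le_trans zero_le_one (le_max_left _ _))

lemma majorant (μ δ θ : ℝ) (hμ : 0 < μ) (hδ : 0 < δ) (hθ : 0 < θ) {t : ℝ} (ht : 0 < t)
    (ht1 : t ≤ 1) :
    Integrable (fun u : ℝ => min 1 (t ^ (-(μ + 1)) * (δ + max 0 (|u| - θ)) ^ (-(1 + 1 / μ)))) ∧
      ∫ u : ℝ, min 1 (t ^ (-(μ + 1)) * (δ + max 0 (|u| - θ)) ^ (-(1 + 1 / μ)))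
        ≤ 2 * θ + (2 + 2 * μ) * t ^ (-μ) := by
  have hTR : t ^ (-(μ + 1)) * t = t ^ (-μ) := by
    nth_rewrite 2 [← Real.rpow_one t]
    rw [← Real.rpow_add ht]; norm_num
  set T : ℝ := t ^ (-(μ + 1)) with hTdef
  set p : ℝ := 1 + 1 / μ with hpdef
  set R : ℝ := t ^ (-μ) with hRdef
  set m : ℝ → ℝ := fun u => min 1 (T * (δ + max 0 (|u| - θ)) ^ (-p)) with hmdef
  have hT0 : 0 < T := Real.rpow_pos_of_pos ht _
  have hR0 : 0 < R := Real.rpow_pos_of_pos ht _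
  have hRtail : R ^ (-p + 1) = t := by
    have h1 : -p + 1 = -(1 / μ) := by rw [hpdef]; ring
    rw [h1, hRdef, ← Real.rpow_mul ht.le]
    have : -μ * -(1 / μ) = 1 := by field_simp
    rw [this, Real.rpow_one]
  clear_value T p R m
  have hbase : ∀ u : ℝ, 0 < δ + max 0 (|u| - θ) := fun u => by positivity
  have hm0 : ∀ u, 0 ≤ m u := fun u => by
    rw [hmdef]
    exact le_min zero_le_one (mul_nonneg hT0.le (Real.rpow_nonneg (hbase u).le _))
  have hm1 : ∀ u, m u ≤ 1 := fun u => by rw [hmdef]; exact min_le_left _ _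
  have hp1 : -p < -1 := by
    have h : 0 < 1 / μ := by positivity
    rw [hpdef]; linarith
  have hmcont : Continuous m := by
    rw [hmdef]
    refine continuous_const.min (continuous_const.mul ?_)
    refine Continuous.rpow_const ?_ (fun u => Or.inl (hbase u).ne')
    exact continuous_const.add (continuous_const.max (continuous_abs.sub continuous_const))
  set g : ℝ → ℝ := fun v => T * v ^ (-p) with hgdef
  clear_value g
  have hIR : IntegrableOn g (Ioi R) := by
    rw [hgdef]; exact (integrableOn_Ioi_rpow_of_lt hp1 hR0).const_mul T
  have hpre : (fun u : ℝ => u + -θ) ⁻¹' Ioi R = Ioi (θ + R) := by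
    ext x
    simp only [mem_preimage, mem_Ioi]
    constructor <;> intro h <;> linarith
  have hI3g : IntegrableOn (fun u : ℝ => g (u + -θ)) (Ioi (θ + R)) := by
    rw [← hpre]
    exact ((measurePreserving_add_right volume (-θ)).integrableOn_comp_preimage
      (measurableEmbedding_addRight (-θ))).2 hIR
  have hcomp : ∀ u ∈ Ioi (θ + R), m u ≤ g (u + -θ) := by
    intro u hu
    have hu' : θ + R < u := hu
    have hu0 : 0 ≤ u := by linarith
    have habs : |u| = u := _root_.abs_of_nonneg hu0
    have h1 : u - θ ≤ δ + max 0 (|u| - θ) := by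
      rw [habs, max_eq_right (by linarith : (0:ℝ) ≤ u - θ)]; linarith
    have h2 : (δ + max 0 (|u| - θ)) ^ (-p) ≤ (u - θ) ^ (-p) :=
      Real.rpow_le_rpow_of_nonpos (by linarith) h1 (by linarith)
    have h3 : u + -θ = u - θ := by ring
    rw [hmdef, hgdef, h3]
    calc min 1 (T * (δ + max 0 (|u| - θ)) ^ (-p)) ≤ T * (δ + max 0 (|u| - θ)) ^ (-p) :=
          min_le_right _ _
    _ ≤ T * (u - θ) ^ (-p) := mul_le_mul_of_nonneg_left h2 hT0.le
  have hI3 : IntegrableOn m (Ioi (θ + R)) := by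
    refine Integrable.mono' hI3g (hmcont.aestronglyMeasurable.restrict) ?_
    refine (ae_restrict_iff' measurableSet_Ioi).2 (Filter.Eventually.of_forall ?_)
    intro u hu
    rw [Real.norm_eq_abs, _root_.abs_of_nonneg (hm0 u)]
    exact hcomp u hu
  have hI2 : IntegrableOn m (Icc (-(θ + R)) (θ + R)) := hmcont.integrableOn_Icc
  have hmeven : (fun u : ℝ => m (-u)) = m := by
    funext u; rw [hmdef]; simp only [abs_neg]
  have hprene : (Neg.neg : ℝ → ℝ) ⁻¹' Ioi (θ + R) = Iio (-(θ + R)) := by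
    ext x
    simp only [mem_preimage, mem_Ioi, mem_Iio]
    constructor <;> intro h <;> linarith
  have hI1 : IntegrableOn m (Iio (-(θ + R))) := by
    have h := ((Measure.measurePreserving_neg (volume : Measure ℝ)).integrableOn_comp_preimage
      (MeasurableEquiv.neg ℝ).measurableEmbedding (f := m) (s := Ioi (θ + R))).2 hI3
    have he : m ∘ (Neg.neg : ℝ → ℝ) = m := hmeven
    rwa [hprene, he] at h
  have hsplit2 : Icc (-(θ + R)) (θ + R) ∪ Ioi (θ + R) = Ici (-(θ + R)) :=
    Icc_union_Ioi_eq_Ici (by linarith)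
  have hIci : IntegrableOn m (Ici (-(θ + R))) := by
    rw [← hsplit2]; exact hI2.union hI3
  have hInt : Integrable m := by
    rw [← integrableOn_univ, ← Iio_union_Ici (a := -(θ + R))]
    exact hI1.union hIci
  refine ⟨hInt, ?_⟩
  -- split the integral
  have hdisj1 : Disjoint (Iio (-(θ + R))) (Ici (-(θ + R))) :=
    disjoint_left.mpr fun x hx hx' => (not_le.2 (mem_Iio.1 hx)) (mem_Ici.1 hx')
  have hdisj2 : Disjoint (Icc (-(θ + R)) (θ + R)) (Ioi (θ + R)) :=
    disjoint_left.mpr fun x hx hx' => absurd hx.2 (not_le.2 hx')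
  have hsum : ∫ u, m u = (∫ u in Iio (-(θ + R)), m u) +
      ((∫ u in Icc (-(θ + R)) (θ + R), m u) + ∫ u in Ioi (θ + R), m u) := by
    rw [← setIntegral_univ, ← Iio_union_Ici (a := -(θ + R)),
      setIntegral_union hdisj1 measurableSet_Ici hI1 hIci, ← hsplit2,
      setIntegral_union hdisj2 measurableSet_Ioi hI2 hI3]
  -- value of the tail comparison integral
  have hIval : ∫ u in Ioi (θ + R), g (u + -θ) = μ * R := by
    have h := (measurePreserving_add_right volume (-θ)).setIntegral_preimage_emb
      (measurableEmbedding_addRight (-θ)) g (Ioi R)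
    rw [hpre] at h
    rw [h, hgdef]
    simp only
    rw [integral_const_mul, integral_Ioi_rpow_of_lt hp1 hR0, hRtail]
    have hp0 : -p + 1 = -(1 / μ) := by rw [hpdef]; ring
    rw [hp0]
    have hq : -t / -(1 / μ) = t * μ := by field_simp
    rw [hq]
    calc T * (t * μ) = T * t * μ := by ring
    _ = μ * R := by rw [hTR]; ring
  have hB3 : ∫ u in Ioi (θ + R), m u ≤ μ * R := by
    rw [← hIval]
    exact setIntegral_mono_on hI3 hI3g measurableSet_Ioi hcomp
  have hB1 : ∫ u in Iio (-(θ + R)), m u = ∫ u in Ioi (θ + R), m u := by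
    have h := (Measure.measurePreserving_neg (volume : Measure ℝ)).setIntegral_preimage_emb
      (MeasurableEquiv.neg ℝ).measurableEmbedding m (Ioi (θ + R))
    rw [hprene] at h
    rw [← h]
    refine setIntegral_congr_fun measurableSet_Iio fun x _ => ?_
    rw [hmdef]; simp only [abs_neg]
  have hB2 : ∫ u in Icc (-(θ + R)) (θ + R), m u ≤ 2 * θ + 2 * R := by
    have hle : ∫ u in Icc (-(θ + R)) (θ + R), m u ≤ ∫ _ in Icc (-(θ + R)) (θ + R), (1 : ℝ) := by
      refine setIntegral_mono_on hI2 ?_ measurableSet_Icc fun x _ => hm1 x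
      exact integrableOn_const (by rw [Real.volume_Icc]; exact ENNReal.ofReal_lt_top.ne)
    refine hle.trans ?_
    rw [setIntegral_const, smul_eq_mul, mul_one, Real.volume_real_Icc,
      max_eq_left (by linarith)]
    linarith
  rw [hsum]
  linarith

/-- Suppose `b̃(τ,λ)` is continuous on `ℝ × Λ(δ,θ)` with
`|b̃(τ,λ)| ≤ C (1 + τ² + |λ|^{2/μ})^{(-μ-1-k)/2}`. For `Re z < 0` and `0 < t ≤ 1` set
`b_z(t,τ) = t^μ ∫_𝒞 λ^z b̃(τ, t^μ λ) dλ`. Then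
`|b_z(t,τ)| ≤ C' e^{θ|Im z|}(1+τ²)^{-k/2}` uniformly for `0 < t ≤ 1`, `τ ∈ ℝ`,
`-1 ≤ Re z < 0`. -/
theorem lower_order_symbol_estimate (μ δ θ k C : ℝ) (hμ : 0 < μ) (hδ : 0 < δ)
    (hθ1 : 0 < θ) (hθ2 : θ < Real.pi) (hk : 0 ≤ k) (hC : 0 ≤ C)
    (b : ℝ → ℂ → ℂ)
    (hcont : ContinuousOn (fun p : ℝ × ℂ => b p.1 p.2) (univ ×ˢ keyhole δ θ))
    (hbd : ∀ (τ : ℝ), ∀ lam ∈ keyhole δ θ,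
      ‖b τ lam‖ ≤
        C * (1 + τ^2 + ‖lam‖ ^ (2/μ)) ^ ((-μ - 1 - k)/2)) :
    ∃ C' : ℝ, 0 ≤ C' ∧ ∀ (t τ : ℝ) (z : ℂ), 0 < t → t ≤ 1 → -1 ≤ z.re → z.re < 0 →
      ‖((t ^ μ : ℝ) : ℂ) *
          ∫ u : ℝ, (keyholeContour δ θ u) ^ z * deriv (keyholeContour δ θ) u *
            b τ (((t ^ μ : ℝ) : ℂ) * keyholeContour δ θ u)‖ ≤
        C' * Real.exp (θ * |z.im|) * (1 + τ^2) ^ (-k/2) := by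
  refine ⟨C * max 1 δ⁻¹ * max 1 δ * (2 * θ + 2 + 2 * μ), ?_, ?_⟩
  · have h1 : (0:ℝ) ≤ max 1 δ⁻¹ := le_trans zero_le_one (le_max_left _ _)
    have h2 : (0:ℝ) ≤ max 1 δ := le_trans zero_le_one (le_max_left _ _)
    have h3 : (0:ℝ) ≤ 2 * θ + 2 + 2 * μ := by linarith
    positivity
  intro t τ z ht ht1 hz1 hz2
  have htμ : 0 < t ^ μ := Real.rpow_pos_of_pos ht μ
  have htμ1 : t ^ μ ≤ 1 := Real.rpow_le_one ht.le ht1 hμ.le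
  have hbase : ∀ u : ℝ, 0 < δ + max 0 (|u| - θ) := fun u => by positivity
  obtain ⟨hIntm, hIm⟩ := majorant μ δ θ hμ hδ hθ1 ht ht1
  set m : ℝ → ℝ := fun u => min 1 (t ^ (-(μ + 1)) * (δ + max 0 (|u| - θ)) ^ (-(1 + 1 / μ)))
    with hmdef
  clear_value m
  set K : ℝ := C * max 1 δ⁻¹ * max 1 δ * Real.exp (θ * |z.im|) * (1 + τ ^ 2) ^ (-k / 2)
    with hKdef
  have hK0 : 0 ≤ K := by
    rw [hKdef]
    have h1 : (0:ℝ) ≤ max 1 δ⁻¹ := le_trans zero_le_one (le_max_left _ _)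
    have h2 : (0:ℝ) ≤ max 1 δ := le_trans zero_le_one (le_max_left _ _)
    positivity
  clear_value K
  have hm0 : ∀ u, 0 ≤ m u := fun u => by
    rw [hmdef]
    exact le_min zero_le_one
      (mul_nonneg (Real.rpow_nonneg ht.le _) (Real.rpow_nonneg (hbase u).le _))
  have hg : Integrable (fun u : ℝ => K * m u) := hIntm.const_mul K
  -- the a.e. pointwise bound
  have hzero : (volume : Measure ℝ) ({-θ, θ} : Set ℝ) = 0 :=
    ((Set.finite_singleton θ).insert (-θ)).measure_zero _
  have hae : ∀ᵐ u : ℝ,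
      ‖(keyholeContour δ θ u) ^ z * deriv (keyholeContour δ θ) u *
        b τ (((t ^ μ : ℝ) : ℂ) * keyholeContour δ θ u)‖ ≤ K * m u := by
    filter_upwards [compl_mem_ae_iff.2 hzero] with u hu
    have hu1 : u ≠ -θ := fun h => hu (by simp [h])
    have hu2 : u ≠ θ := fun h => hu (by simp [h])
    have habsγ : ‖keyholeContour δ θ u‖ = δ + max 0 (|u| - θ) :=
      contour_abs hδ hθ1 u
    -- bound 1 : the power
    have hb1 : ‖(keyholeContour δ θ u) ^ z‖ ≤
        max 1 δ⁻¹ * Real.exp (θ * |z.im|) := by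
      refine cpow_abs_bound hδ ?_ ?_ hz1 hz2.le
      · rw [habsγ]; exact le_add_of_nonneg_right (le_max_left _ _)
      · have := (contour_arg hδ hθ1 hθ2 u one_pos).1
        simpa using this
    -- bound 2 : the derivative
    have hb2 : ‖deriv (keyholeContour δ θ) u‖ ≤ max 1 δ :=
      contour_deriv hδ hθ1 hu1 hu2
    -- bound 3 : the symbol
    have hb3 : ‖b τ (((t ^ μ : ℝ) : ℂ) * keyholeContour δ θ u)‖ ≤
        C * ((1 + τ ^ 2) ^ (-k / 2) * m u) := by
      have hmem : ((t ^ μ : ℝ) : ℂ) * keyholeContour δ θ u ∈ keyhole δ θ :=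
        contour_mem hδ hθ1 hθ2 u htμ htμ1
      have h := hbd τ _ hmem
      have habs : ‖((t ^ μ : ℝ) : ℂ) * keyholeContour δ θ u‖
          = t ^ μ * (δ + max 0 (|u| - θ)) := by
        rw [norm_mul, Complex.norm_real, Real.norm_eq_abs, _root_.abs_of_pos htμ, habsγ]
      rw [habs] at h
      refine h.trans ?_
      have hsplit := rpow_split μ k hμ hk ht (hbase u) τ
      simp only [hmdef]
      exact mul_le_mul_of_nonneg_left hsplit hC
    -- combine the three bounds
    have hP1 : (0:ℝ) ≤ max 1 δ⁻¹ * Real.exp (θ * |z.im|) :=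
      mul_nonneg (le_trans zero_le_one (le_max_left _ _)) (Real.exp_pos _).le
    have hP2 : (0:ℝ) ≤ max 1 δ := le_trans zero_le_one (le_max_left _ _)
    calc ‖(keyholeContour δ θ u) ^ z * deriv (keyholeContour δ θ) u *
        b τ (((t ^ μ : ℝ) : ℂ) * keyholeContour δ θ u)‖
        = ‖(keyholeContour δ θ u) ^ z‖ *
            ‖deriv (keyholeContour δ θ) u‖ *
            ‖b τ (((t ^ μ : ℝ) : ℂ) * keyholeContour δ θ u)‖ := by
          rw [norm_mul, norm_mul]
    _ ≤ (max 1 δ⁻¹ * Real.exp (θ * |z.im|)) * max 1 δ *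
          (C * ((1 + τ ^ 2) ^ (-k / 2) * m u)) := by
        refine mul_le_mul (mul_le_mul hb1 hb2 (norm_nonneg _) hP1) hb3
          (norm_nonneg _) (mul_nonneg hP1 hP2)
    _ = K * m u := by rw [hKdef]; ring
  -- putting everything together
  have hnorm := norm_integral_le_of_norm_le hg hae
  rw [integral_const_mul] at hnorm
  have hone : t ^ μ * t ^ (-μ) = 1 := by
    rw [← Real.rpow_add ht]; simp
  rw [norm_mul, Complex.norm_real, Real.norm_eq_abs, _root_.abs_of_pos htμ]
  calc t ^ μ * ‖∫ u : ℝ, (keyholeContour δ θ u) ^ z *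
        deriv (keyholeContour δ θ) u * b τ (((t ^ μ : ℝ) : ℂ) * keyholeContour δ θ u)‖
      ≤ t ^ μ * (K * ∫ u : ℝ, m u) := mul_le_mul_of_nonneg_left hnorm htμ.le
  _ ≤ t ^ μ * (K * (2 * θ + (2 + 2 * μ) * t ^ (-μ))) :=
      mul_le_mul_of_nonneg_left (mul_le_mul_of_nonneg_left hIm hK0) htμ.le
  _ = K * (2 * θ * t ^ μ + (2 + 2 * μ) * (t ^ μ * t ^ (-μ))) := by ring
  _ = K * (2 * θ * t ^ μ + (2 + 2 * μ)) := by rw [hone, mul_one]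
  _ ≤ K * (2 * θ + 2 + 2 * μ) := by
      refine mul_le_mul_of_nonneg_left ?_ hK0
      nlinarith [htμ1, htμ.le, hθ1.le]
  _ = C * max 1 δ⁻¹ * max 1 δ * (2 * θ + 2 + 2 * μ) * Real.exp (θ * |z.im|) *
        (1 + τ ^ 2) ^ (-k / 2) := by rw [hKdef]; ring
end
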